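/- arXiv:1607.02330 — 5 statements merged into one kernel-verified Lean document; each statement's English description precedes it below -/
import Mathlib

section
/- Let P and Q be probability mass functions on a finite set X and let α > 0. Define P̃(x) = P(x)^α / Σ_{x'} P(x')^α and Q̃(x) = Q(x)^α / Σ_{x'} Q(x')^α. Then the relative α-entropy satisfies Δ_α(P||Q) = D_{1/α}(P̃||Q̃), with the left-hand side infinite if and only if the right-hand side is infinite. -/
open scoped ENNReal BigOperators
open Finset

/-- Kullback-Leibler divergence between two PMFs on a finite set, valued in `EReal`
(`⊤` when `P` is not absolutely continuous w.r.t. `Q`). -/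
noncomputable def klDiv {X : Type*} [Fintype X] (P Q : X → ℝ≥0∞) : EReal :=
  if ∀ x, Q x = 0 → P x = 0 then
    (((∑ x, (P x).toReal * Real.log ((P x).toReal / (Q x).toReal)) : ℝ) : EReal)
  else ⊤

/-- Rényi divergence of order `α` (KL divergence at `α = 1`).  The ENNReal conventions
`0 * ⊤ = 0` and `0 ^ y = ⊤` for `y < 0` encode `0/0 = 0` and `p/0 = ∞`. -/
noncomputable def renyiDiv {X : Type*} [Fintype X] (α : ℝ) (P Q : X → ℝ≥0∞) : EReal :=
  if α = 1 then klDiv P Q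
  else (((α - 1)⁻¹ : ℝ) : EReal) * ENNReal.log (∑ x, P x ^ α * Q x ^ (1 - α))

/-- Relative α-entropy (Sundaresan's divergence); KL divergence at `α = 1`. -/
noncomputable def relAlphaEnt {X : Type*} [Fintype X] (α : ℝ) (P Q : X → ℝ≥0∞) : EReal :=
  if α = 1 then klDiv P Q
  else ((α / (1 - α) : ℝ) : EReal) * ENNReal.log (∑ x, P x * Q x ^ (α - 1))
    + ENNReal.log (∑ x, Q x ^ α)
    - (((1 - α)⁻¹ : ℝ) : EReal) * ENNReal.log (∑ x, P x ^ α)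

/-- The set of PMFs on a finite type, as a subtype. -/
def PMFon (X : Type*) [Fintype X] : Type _ := {p : X → ℝ≥0∞ // ∑ x, p x = 1}

noncomputable def margX {X Y : Type*} [Fintype X] [Fintype Y] (P : X × Y → ℝ≥0∞) : X → ℝ≥0∞ :=
  fun x => ∑ y, P (x, y)

noncomputable def margY {X Y : Type*} [Fintype X] [Fintype Y] (P : X × Y → ℝ≥0∞) : Y → ℝ≥0∞ :=
  fun y => ∑ x, P (x, y)

/-- Mutual information of a joint PMF. -/
noncomputable def mutualInfo {X Y : Type*} [Fintype X] [Fintype Y] (P : X × Y → ℝ≥0∞) : EReal :=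
  klDiv P (fun p => margX P p.1 * margY P p.2)

/-- The dependence measure `J_α`. -/
noncomputable def Jalpha {X Y : Type*} [Fintype X] [Fintype Y] (α : ℝ) (P : X × Y → ℝ≥0∞) :
    EReal :=
  ⨅ (Q : PMFon X × PMFon Y), renyiDiv α P (fun p => Q.1.1 p.1 * Q.2.1 p.2)

/-- The dependence measure `K_α`. -/
noncomputable def Kalpha {X Y : Type*} [Fintype X] [Fintype Y] (α : ℝ) (P : X × Y → ℝ≥0∞) :
    EReal :=
  ⨅ (Q : PMFon X × PMFon Y), relAlphaEnt α P (fun p => Q.1.1 p.1 * Q.2.1 p.2)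

/-- Rényi entropy of order `β`. -/
noncomputable def renyiEnt {X : Type*} [Fintype X] (β : ℝ) (P : X → ℝ≥0∞) : EReal :=
  if β = 1 then (((∑ x, (P x).toReal * Real.log (P x).toReal⁻¹ : ℝ)) : EReal)
  else (((1 - β)⁻¹ : ℝ) : EReal) * ENNReal.log (∑ x, P x ^ β)

/-- Min-entropy. -/
noncomputable def minEnt {X : Type*} [Fintype X] (P : X → ℝ≥0∞) : EReal :=
  - ENNReal.log (⨆ x, P x)


section aux

open scoped ENNReal
open Finset

lemma ereal_mul_add_coe (c r : ℝ) (hc : c ≠ 0) (L : EReal) :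
    (c : EReal) * (L + (r : EReal)) = (c : EReal) * L + ((c * r : ℝ) : EReal) := by
  induction L using EReal.rec with
  | bot =>
    rcases hc.lt_or_gt with h | h
    · rw [EReal.bot_add, EReal.coe_mul_bot_of_neg h, EReal.top_add_coe]
    · rw [EReal.bot_add, EReal.coe_mul_bot_of_pos h, EReal.bot_add]
  | coe x => rw [← EReal.coe_add, ← EReal.coe_mul, ← EReal.coe_mul, ← EReal.coe_add]; ring_nf
  | top =>
    rcases hc.lt_or_gt with h | h
    · rw [EReal.top_add_coe, EReal.coe_mul_top_of_neg h, EReal.bot_add]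
    · rw [EReal.top_add_coe, EReal.coe_mul_top_of_pos h, EReal.top_add_coe]

lemma sum_rpow_ne_zero {X : Type*} [Fintype X] (P : X → ℝ≥0∞) (hP : ∑ x, P x = 1)
    {α : ℝ} (hα : 0 < α) : (∑ x, P x ^ α) ≠ 0 := by
  intro h
  rw [Finset.sum_eq_zero_iff] at h
  have : ∑ x, P x = 0 := Finset.sum_eq_zero fun x hx => by
    have := h x hx
    rw [ENNReal.rpow_eq_zero_iff_of_pos hα] at this
    exact this
  rw [this] at hP; exact one_ne_zero hP.symm

lemma sum_rpow_ne_top {X : Type*} [Fintype X] (P : X → ℝ≥0∞) (hP : ∑ x, P x = 1)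
    {α : ℝ} (hα : 0 < α) : (∑ x, P x ^ α) ≠ ⊤ := by
  refine (ENNReal.sum_lt_top.2 fun x _ => ?_).ne
  have hx1 : P x ≠ ⊤ := by
    refine ne_top_of_le_ne_top ?_ (Finset.single_le_sum (fun i _ => zero_le) (Finset.mem_univ x))
    rw [hP]; exact ENNReal.one_ne_top
  exact (ENNReal.rpow_ne_top_of_nonneg hα.le hx1).lt_top

end aux

/-- `Δ_α(P‖Q) = D_{1/α}(P̃‖Q̃)` for the rescaled PMFs, and the LHS is
infinite iff the RHS is. -/
theorem stmt0 {X : Type*} [Fintype X] (P Q : X → ℝ≥0∞)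
    (hP : ∑ x, P x = 1) (hQ : ∑ x, Q x = 1) (α : ℝ) (hα : 0 < α) :
    relAlphaEnt α P Q =
      renyiDiv α⁻¹ (fun x => P x ^ α / ∑ x', P x' ^ α)
        (fun x => Q x ^ α / ∑ x', Q x' ^ α) ∧
    (relAlphaEnt α P Q = ⊤ ↔
      renyiDiv α⁻¹ (fun x => P x ^ α / ∑ x', P x' ^ α)
        (fun x => Q x ^ α / ∑ x', Q x' ^ α) = ⊤) := by
  have key : relAlphaEnt α P Q =
      renyiDiv α⁻¹ (fun x => P x ^ α / ∑ x', P x' ^ α)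
        (fun x => Q x ^ α / ∑ x', Q x' ^ α) := by
    by_cases h1 : α = 1
    · subst h1
      have hPf : (fun x => P x ^ (1:ℝ) / ∑ x', P x' ^ (1:ℝ)) = P := by
        funext x; simp [hP]
      have hQf : (fun x => Q x ^ (1:ℝ) / ∑ x', Q x' ^ (1:ℝ)) = Q := by
        funext x; simp [hQ]
      rw [relAlphaEnt, renyiDiv, hPf, hQf, if_pos rfl, if_pos inv_one]
    · have hα0 : α ≠ 0 := hα.ne'
      have hi1 : α⁻¹ ≠ 1 := fun h => h1 (by rw [← inv_inv α, h, inv_one])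
      set A := ∑ x, P x ^ α with hAdef
      set B := ∑ x, Q x ^ α with hBdef
      have hA0 : A ≠ 0 := sum_rpow_ne_zero P hP hα
      have hAt : A ≠ ⊤ := sum_rpow_ne_top P hP hα
      have hB0 : B ≠ 0 := sum_rpow_ne_zero Q hQ hα
      have hBt : B ≠ ⊤ := sum_rpow_ne_top Q hQ hα
      set a := Real.log A.toReal with hadef
      set b := Real.log B.toReal with hbdef
      have hA : ENNReal.log A = (a : EReal) :=
        ENNReal.log_pos_real' (ENNReal.toReal_pos hA0 hAt)
      have hB : ENNReal.log B = (b : EReal) :=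
        ENNReal.log_pos_real' (ENNReal.toReal_pos hB0 hBt)
      have hsum : (∑ x, (P x ^ α / A) ^ α⁻¹ * (Q x ^ α / B) ^ (1 - α⁻¹))
          = (∑ x, P x * Q x ^ (α - 1)) * ((A ^ α⁻¹)⁻¹ * (B ^ (1 - α⁻¹))⁻¹) := by
        rw [Finset.sum_mul]
        refine Finset.sum_congr rfl fun x _ => ?_
        have hQx : Q x ≠ ⊤ := by
          refine ne_top_of_le_ne_top ?_
            (Finset.single_le_sum (fun i _ => zero_le) (Finset.mem_univ x))
          rw [hQ]; exact ENNReal.one_ne_top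
        have hQxt : Q x ^ α ≠ ⊤ := ENNReal.rpow_ne_top_of_nonneg hα.le hQx
        have hexp : α * (1 - α⁻¹) = α - 1 := by field_simp
        rw [ENNReal.div_rpow_of_nonneg _ _ (by positivity : (0:ℝ) ≤ α⁻¹),
          ← ENNReal.rpow_mul, mul_inv_cancel₀ hα0, ENNReal.rpow_one,
          div_eq_mul_inv (Q x ^ α) B,
          ENNReal.mul_rpow_of_ne_top hQxt (ENNReal.inv_ne_top.2 hB0),
          ← ENNReal.rpow_mul, hexp, ENNReal.inv_rpow, div_eq_mul_inv]
        ring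
      have hc' : ((α⁻¹ - 1)⁻¹ : ℝ) ≠ 0 := inv_ne_zero (sub_ne_zero.2 hi1)
      rw [relAlphaEnt, renyiDiv, if_neg h1, if_neg hi1, hsum, ENNReal.log_mul_add,
        ENNReal.log_mul_add, ENNReal.log_inv, ENNReal.log_inv, ENNReal.log_rpow,
        ENNReal.log_rpow, hA, hB]
      have hlogK : -(((α⁻¹ : ℝ) : EReal) * (a : EReal)) + -(((1 - α⁻¹ : ℝ) : EReal) * (b : EReal))
          = ((-(α⁻¹ * a + (1 - α⁻¹) * b) : ℝ) : EReal) := by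
        rw [show (-(α⁻¹ * a + (1 - α⁻¹) * b) : ℝ)
            = -(α⁻¹ * a) + -((1 - α⁻¹) * b) by ring,
          EReal.coe_add, EReal.coe_neg, EReal.coe_neg, EReal.coe_mul, EReal.coe_mul]
      rw [hlogK, ereal_mul_add_coe _ _ hc']
      have hcc : ((α / (1 - α) : ℝ) : EReal) = (((α⁻¹ - 1)⁻¹ : ℝ) : EReal) := by
        rw [EReal.coe_eq_coe_iff]
        have h1a : (1:ℝ) - α ≠ 0 := sub_ne_zero.2 fun h => h1 h.symm
        field_simp
      rw [hcc]
      rw [sub_eq_add_neg, add_assoc, ← EReal.coe_mul, ← EReal.coe_neg, ← EReal.coe_add]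
      congr 1
      rw [EReal.coe_eq_coe_iff]
      have h1a : (1:ℝ) - α ≠ 0 := sub_ne_zero.2 fun h => h1 h.symm
      field_simp
      ring
  exact ⟨key, by rw [key]⟩
end

section
/- J_α satisfies the data-processing inequality: if X, Y, Z are finite random variables forming a Markov chain X — Y — Z (i.e., P_{Z|XY}(z|x,y) = P_{Z|Y}(z|y)), then J_α(X;Z) ≤ J_α(X;Y) for every α > 0. -/
open scoped ENNReal BigOperators
open Finset

lemma sum_one_ne_top {ι : Type*} [Fintype ι] {f : ι → ℝ≥0∞} (h : ∑ i, f i = 1) (i : ι) :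
    f i ≠ ⊤ :=
  (ENNReal.lt_top_of_sum_ne_top (by rw [h]; exact ENNReal.one_ne_top) (mem_univ i)).ne

lemma myLogSum {ι : Type*} [Fintype ι] (a b : ι → ℝ) (ha : ∀ i, 0 ≤ a i) (hb : ∀ i, 0 ≤ b i)
    (hac : ∀ i, b i = 0 → a i = 0) :
    (∑ i, a i) * Real.log ((∑ i, a i)/(∑ i, b i)) ≤ ∑ i, a i * Real.log (a i / b i) := by
  set A := ∑ i, a i with hA
  set B := ∑ i, b i with hB
  have hA0 : 0 ≤ A := Finset.sum_nonneg fun i _ => ha i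
  have hB0 : 0 ≤ B := Finset.sum_nonneg fun i _ => hb i
  rcases eq_or_lt_of_le hA0 with hAz | hApos
  · have h0 : ∀ i, a i = 0 := by
      intro i
      have := (Finset.sum_eq_zero_iff_of_nonneg (fun i _ => ha i)).mp hAz.symm
      exact this i (mem_univ i)
    have : A = 0 := hAz.symm
    rw [this]
    simp [h0]
  · have hBpos : 0 < B := by
      rcases eq_or_lt_of_le hB0 with hBz | h
      · exfalso
        have h0 : ∀ i, b i = 0 := by
          intro i
          have := (Finset.sum_eq_zero_iff_of_nonneg (fun i _ => hb i)).mp hBz.symm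
          exact this i (mem_univ i)
        have : A = 0 := Finset.sum_eq_zero fun i _ => hac i (h0 i)
        rw [this] at hApos; exact lt_irrefl _ hApos
      · exact h
    have key : ∀ i, a i * Real.log (A/B) + (a i - b i * (A/B)) ≤ a i * Real.log (a i / b i) := by
      intro i
      rcases eq_or_lt_of_le (ha i) with h0 | hpos
      · rw [← h0]
        have : 0 ≤ b i * (A/B) := mul_nonneg (hb i) (div_nonneg hA0 hB0)
        simp only [zero_mul, zero_add, zero_sub]
        linarith
      · have hbpos : 0 < b i := by
          rcases eq_or_lt_of_le (hb i) with hbz | h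
          · exfalso; have := hac i hbz.symm; linarith
          · exact h
        have ht : 0 < (b i * A)/(a i * B) := div_pos (mul_pos hbpos hApos) (mul_pos hpos hBpos)
        have hlog := Real.log_le_sub_one_of_pos ht
        have hlogsplit : Real.log (a i / b i) = Real.log (A/B) - Real.log ((b i * A)/(a i * B)) := by
          rw [Real.log_div (ne_of_gt hpos) (ne_of_gt hbpos),
              Real.log_div (ne_of_gt (mul_pos hbpos hApos)) (ne_of_gt (mul_pos hpos hBpos)),
              Real.log_div (ne_of_gt hApos) (ne_of_gt hBpos),
              Real.log_mul (ne_of_gt hbpos) (ne_of_gt hApos),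
              Real.log_mul (ne_of_gt hpos) (ne_of_gt hBpos)]
          ring
        rw [hlogsplit, mul_sub]
        have h2 : a i * Real.log ((b i * A)/(a i * B)) ≤ a i * ((b i * A)/(a i * B) - 1) :=
          mul_le_mul_of_nonneg_left hlog (le_of_lt hpos)
        have h3 : a i * ((b i * A)/(a i * B)) = b i * (A/B) := by
          field_simp
        nlinarith
    calc A * Real.log (A/B) = ∑ i, (a i * Real.log (A/B) + (a i - b i * (A/B))) := by
          rw [Finset.sum_add_distrib, ← Finset.sum_mul, Finset.sum_sub_distrib, ← Finset.sum_mul,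
            ← hA, ← hB]
          field_simp
          ring
      _ ≤ ∑ i, a i * Real.log (a i / b i) := Finset.sum_le_sum fun i _ => key i


-- α ∈ (0,1): Hölder direct
lemma key1 {ι : Type*} [Fintype ι] (a b : ι → ℝ≥0∞) {α : ℝ} (hα : 0 < α) (hα1 : α < 1) :
    ∑ i, a i ^ α * b i ^ (1 - α) ≤ (∑ i, a i) ^ α * (∑ i, b i) ^ (1 - α) := by
  have h1α : 0 < 1 - α := by linarith
  have hpq : (α⁻¹).HolderConjugate (1 - α)⁻¹ := by
    rw [Real.holderConjugate_iff]
    constructor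
    · rw [lt_inv_comm₀] <;> linarith
    · rw [inv_inv, inv_inv]; ring
  have := ENNReal.inner_le_Lp_mul_Lq univ (fun i => a i ^ α) (fun i => b i ^ (1 - α)) hpq
  simp only [← ENNReal.rpow_mul] at this
  rw [mul_inv_cancel₀ (ne_of_gt hα), mul_inv_cancel₀ (ne_of_gt h1α)] at this
  simp only [ENNReal.rpow_one, one_div, inv_inv] at this
  exact this

-- α > 1: reverse direction
lemma key2 {ι : Type*} [Fintype ι] (a b : ι → ℝ≥0∞) (hb : ∀ i, b i ≠ ⊤) {α : ℝ}
    (hα1 : 1 < α) :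
    (∑ i, a i) ^ α * (∑ i, b i) ^ (1 - α) ≤ ∑ i, a i ^ α * b i ^ (1 - α) := by
  have hα : 0 < α := by linarith
  by_cases hbad : ∃ i, b i = 0 ∧ a i ≠ 0
  · obtain ⟨i, hbi, hai⟩ := hbad
    have : a i ^ α * b i ^ (1 - α) = ⊤ := by
      rw [hbi, ENNReal.zero_rpow_of_neg (by linarith), ENNReal.mul_top]
      simp [ENNReal.rpow_eq_zero_iff, hai, hα, not_lt.mpr hα.le]
    have hle : (⊤ : ℝ≥0∞) ≤ ∑ i, a i ^ α * b i ^ (1 - α) :=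
      this ▸ Finset.single_le_sum (f := fun i => a i ^ α * b i ^ (1 - α))
        (fun i _ => zero_le) (mem_univ i)
    exact le_trans le_top hle
  · push_neg at hbad
    by_cases hB : ∑ i, b i = 0
    · have hb0 : ∀ i, b i = 0 := by
        intro i; rw [Finset.sum_eq_zero_iff] at hB; exact hB i (mem_univ i)
      have ha0 : ∀ i, a i = 0 := fun i => hbad i (hb0 i)
      have : ∑ i, a i = 0 := Finset.sum_eq_zero fun i _ => ha0 i
      rw [this, ENNReal.zero_rpow_of_pos hα, zero_mul]
      exact zero_le
    · have hinv : (0:ℝ) < 1 - α⁻¹ := by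
        have h1 : α⁻¹ < 1 := by
          rw [inv_lt_one₀ hα]; exact hα1
        linarith
      have hBtop : ∑ i, b i ≠ ⊤ := by
        intro h
        rw [ENNReal.sum_eq_top] at h
        obtain ⟨i, _, hi⟩ := h
        exact hb i hi
      set T := ∑ i, a i ^ α * b i ^ (1 - α) with hT
      have hpq : α.HolderConjugate (1 - α⁻¹)⁻¹ := by
        rw [Real.holderConjugate_iff]
        constructor
        · exact hα1
        · rw [inv_inv]; ring
      have holder := ENNReal.inner_le_Lp_mul_Lq univ
        (fun i => (a i ^ α * b i ^ (1 - α)) ^ α⁻¹) (fun i => b i ^ (1 - α⁻¹)) hpq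
      have hfg : ∀ i, (a i ^ α * b i ^ (1 - α)) ^ α⁻¹ * b i ^ (1 - α⁻¹) = a i := by
        intro i
        by_cases hbi : b i = 0
        · have hai : a i = 0 := hbad i hbi
          rw [hbi, hai, ENNReal.zero_rpow_of_pos hinv, mul_zero]
        · rw [ENNReal.mul_rpow_of_nonneg _ _ (by positivity : (0:ℝ) ≤ α⁻¹),
            ← ENNReal.rpow_mul, ← ENNReal.rpow_mul,
            mul_inv_cancel₀ (ne_of_gt hα), ENNReal.rpow_one, mul_assoc,
            ← ENNReal.rpow_add _ _ hbi (hb i)]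
          have : (1 - α) * α⁻¹ + (1 - α⁻¹) = 0 := by field_simp; ring
          rw [this, ENNReal.rpow_zero, mul_one]
      have hsum_fg : ∑ i, a i ≤ (∑ i, ((a i ^ α * b i ^ (1 - α)) ^ α⁻¹) ^ α) ^ (1/α)
          * (∑ i, (b i ^ (1 - α⁻¹)) ^ (1 - α⁻¹)⁻¹) ^ (1/(1 - α⁻¹)⁻¹) := by
        calc ∑ i, a i = ∑ i, (a i ^ α * b i ^ (1 - α)) ^ α⁻¹ * b i ^ (1 - α⁻¹) := by
              exact Finset.sum_congr rfl fun i _ => (hfg i).symm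
          _ ≤ _ := holder
      have e1 : ∀ i, ((a i ^ α * b i ^ (1 - α)) ^ α⁻¹) ^ α = a i ^ α * b i ^ (1 - α) := by
        intro i
        rw [← ENNReal.rpow_mul, inv_mul_cancel₀ (ne_of_gt hα), ENNReal.rpow_one]
      have e2 : ∀ i, (b i ^ (1 - α⁻¹)) ^ (1 - α⁻¹)⁻¹ = b i := by
        intro i
        rw [← ENNReal.rpow_mul, mul_inv_cancel₀ (ne_of_gt hinv), ENNReal.rpow_one]
      simp only [e1, e2] at hsum_fg
      -- hsum_fg : ∑ a ≤ T ^ (1/α) * B ^ (1/(1-α⁻¹)⁻¹)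
      have eexp : (1 / (1 - α⁻¹)⁻¹ : ℝ) = 1 - α⁻¹ := by rw [one_div, inv_inv]
      rw [eexp, one_div] at hsum_fg
      have step : (∑ i, a i) ^ α ≤ T * (∑ i, b i) ^ (α - 1) := by
        calc (∑ i, a i) ^ α ≤ (T ^ α⁻¹ * (∑ i, b i) ^ (1 - α⁻¹)) ^ α :=
              ENNReal.rpow_le_rpow hsum_fg hα.le
          _ = T * (∑ i, b i) ^ (α - 1) := by
              rw [ENNReal.mul_rpow_of_nonneg _ _ hα.le, ← ENNReal.rpow_mul, ← ENNReal.rpow_mul,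
                inv_mul_cancel₀ (ne_of_gt hα), ENNReal.rpow_one]
              congr 2
              field_simp
      calc (∑ i, a i) ^ α * (∑ i, b i) ^ (1 - α)
          ≤ (T * (∑ i, b i) ^ (α - 1)) * (∑ i, b i) ^ (1 - α) :=
            mul_le_mul_left step _
        _ = T := by
            rw [mul_assoc, ← ENNReal.rpow_add _ _ hB hBtop]
            norm_num

lemma kl_dpi {I O : Type*} [Fintype I] [Fintype O] (P Q : I → ℝ≥0∞)
    (hPf : ∀ i, P i ≠ ⊤) (hQf : ∀ i, Q i ≠ ⊤)
    (A : I → O → ℝ≥0∞) (hA : ∀ i, ∑ o, A i o = 1) :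
    klDiv (fun o => ∑ i, P i * A i o) (fun o => ∑ i, Q i * A i o) ≤ klDiv P Q := by
  have hAf : ∀ i o, A i o ≠ ⊤ := fun i o => sum_one_ne_top (hA i) o
  unfold klDiv
  by_cases hac : ∀ i, Q i = 0 → P i = 0
  · have hac' : ∀ o, (∑ i, Q i * A i o) = 0 → (∑ i, P i * A i o) = 0 := by
      intro o h
      rw [Finset.sum_eq_zero_iff] at h ⊢
      intro i _
      rcases mul_eq_zero.mp (h i (mem_univ i)) with hq | ha
      · rw [hac i hq, zero_mul]
      · rw [ha, mul_zero]
    rw [if_pos hac', if_pos hac]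
    apply EReal.coe_le_coe_iff.2
    have hPAf : ∀ o, (∑ i, P i * A i o).toReal = ∑ i, (P i * A i o).toReal := fun o =>
      ENNReal.toReal_sum fun i _ => ENNReal.mul_ne_top (hPf i) (hAf i o)
    have hQAf : ∀ o, (∑ i, Q i * A i o).toReal = ∑ i, (Q i * A i o).toReal := fun o =>
      ENNReal.toReal_sum fun i _ => ENNReal.mul_ne_top (hQf i) (hAf i o)
    calc ∑ o, (∑ i, P i * A i o).toReal *
          Real.log ((∑ i, P i * A i o).toReal / (∑ i, Q i * A i o).toReal)
        ≤ ∑ o, ∑ i, (P i * A i o).toReal *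
            Real.log ((P i * A i o).toReal / (Q i * A i o).toReal) := by
          apply Finset.sum_le_sum
          intro o _
          rw [hPAf o, hQAf o]
          apply myLogSum
          · exact fun i => ENNReal.toReal_nonneg
          · exact fun i => ENNReal.toReal_nonneg
          · intro i h
            have h0 : Q i * A i o = 0 := by
              rcases (ENNReal.toReal_eq_zero_iff _).mp h with h' | h'
              · exact h'
              · exact absurd h' (ENNReal.mul_ne_top (hQf i) (hAf i o))
            rcases mul_eq_zero.mp h0 with hq | ha
            · rw [hac i hq, zero_mul, ENNReal.toReal_zero]
            · rw [ha, mul_zero, ENNReal.toReal_zero]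
      _ = ∑ i, (P i).toReal * Real.log ((P i).toReal / (Q i).toReal) := by
          rw [Finset.sum_comm]
          apply Finset.sum_congr rfl
          intro i _
          have hterm : ∀ o, (P i * A i o).toReal *
              Real.log ((P i * A i o).toReal / (Q i * A i o).toReal)
              = (P i).toReal * Real.log ((P i).toReal / (Q i).toReal) * (A i o).toReal := by
            intro o
            rw [ENNReal.toReal_mul, ENNReal.toReal_mul]
            by_cases hAo : (A i o).toReal = 0
            · simp [hAo]
            · rw [mul_div_mul_right _ _ hAo]; ring
          simp only [hterm]
          rw [← Finset.mul_sum]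
          have : ∑ o, (A i o).toReal = 1 := by
            rw [← ENNReal.toReal_sum (fun o _ => hAf i o), hA i, ENNReal.toReal_one]
          rw [this, mul_one]
  · rw [if_neg hac]
    exact le_top

lemma renyi_dpi {I O : Type*} [Fintype I] [Fintype O] (P Q : I → ℝ≥0∞)
    (hPf : ∀ i, P i ≠ ⊤) (hQf : ∀ i, Q i ≠ ⊤)
    (A : I → O → ℝ≥0∞) (hA : ∀ i, ∑ o, A i o = 1) {α : ℝ} (hα : 0 < α) :
    renyiDiv α (fun o => ∑ i, P i * A i o) (fun o => ∑ i, Q i * A i o) ≤ renyiDiv α P Q := by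
  have hAf : ∀ i o, A i o ≠ ⊤ := fun i o => sum_one_ne_top (hA i) o
  by_cases hα1 : α = 1
  · subst hα1
    simp only [renyiDiv, if_pos rfl]
    exact kl_dpi P Q hPf hQf A hA
  · simp only [renyiDiv, if_neg hα1]
    have prods : ∀ i o, (P i * A i o) ^ α * (Q i * A i o) ^ (1 - α)
        = (P i ^ α * Q i ^ (1 - α)) * A i o := by
      intro i o
      by_cases hAo : A i o = 0
      · rw [hAo, mul_zero, mul_zero, mul_zero, ENNReal.zero_rpow_of_pos hα, zero_mul]
      · rw [ENNReal.mul_rpow_of_ne_top (hPf i) (hAf i o),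
          ENNReal.mul_rpow_of_ne_top (hQf i) (hAf i o), mul_mul_mul_comm]
        congr 1
        rw [← ENNReal.rpow_add _ _ hAo (hAf i o)]
        norm_num
    have smid : ∑ o, ∑ i, (P i ^ α * Q i ^ (1 - α)) * A i o
        = ∑ i, P i ^ α * Q i ^ (1 - α) := by
      rw [Finset.sum_comm]
      refine Finset.sum_congr rfl fun i _ => ?_
      rw [← Finset.mul_sum, hA i, mul_one]
    rcases lt_or_gt_of_ne hα1 with hlt | hgt
    · -- α < 1 : sum increases, coefficient negative
      have hS : ∑ i, P i ^ α * Q i ^ (1 - α)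
          ≤ ∑ o, (∑ i, P i * A i o) ^ α * (∑ i, Q i * A i o) ^ (1 - α) := by
        rw [← smid]
        apply Finset.sum_le_sum
        intro o _
        calc ∑ i, (P i ^ α * Q i ^ (1 - α)) * A i o
            = ∑ i, (P i * A i o) ^ α * (Q i * A i o) ^ (1 - α) := by
              exact Finset.sum_congr rfl fun i _ => (prods i o).symm
          _ ≤ _ := key1 (fun i => P i * A i o) (fun i => Q i * A i o) hα hlt
      have hlog := ENNReal.log_monotone hS
      have hcoef : ((α - 1)⁻¹ : ℝ) = -((1 - α)⁻¹ : ℝ) := by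
        rw [← inv_neg]
        norm_num
      rw [hcoef, EReal.coe_neg, neg_mul, neg_mul, EReal.neg_le_neg_iff]
      apply mul_le_mul_of_nonneg_left hlog
      apply EReal.coe_nonneg.2
      rw [inv_nonneg]
      linarith
    · -- α > 1 : sum decreases, coefficient positive
      have hS : ∑ o, (∑ i, P i * A i o) ^ α * (∑ i, Q i * A i o) ^ (1 - α)
          ≤ ∑ i, P i ^ α * Q i ^ (1 - α) := by
        rw [← smid]
        apply Finset.sum_le_sum
        intro o _
        calc (∑ i, P i * A i o) ^ α * (∑ i, Q i * A i o) ^ (1 - α)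
            ≤ ∑ i, (P i * A i o) ^ α * (Q i * A i o) ^ (1 - α) :=
              key2 (fun i => P i * A i o) (fun i => Q i * A i o)
                (fun i => ENNReal.mul_ne_top (hQf i) (hAf i o)) hgt
          _ = ∑ i, (P i ^ α * Q i ^ (1 - α)) * A i o :=
              Finset.sum_congr rfl fun i _ => prods i o
      apply mul_le_mul_of_nonneg_left (ENNReal.log_monotone hS)
      apply EReal.coe_nonneg.2
      rw [inv_nonneg]
      linarith

/-- data-processing inequality for `J_α`: if `X — Y — Z` is a Markov chain,
i.e. `P_{XYZ}(x,y,z) = P_{XY}(x,y) W(z|y)` for a channel `W = P_{Z|Y}`, then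
`J_α(X;Z) ≤ J_α(X;Y)`. -/
theorem stmt4 {X Y Z : Type*} [Fintype X] [Fintype Y] [Fintype Z]
    (P : X × Y → ℝ≥0∞) (hP : ∑ p, P p = 1)
    (W : Y → Z → ℝ≥0∞) (hW : ∀ y, ∑ z, W y z = 1) (α : ℝ) (hα : 0 < α) :
    Jalpha α (fun q : X × Z => ∑ y, P (q.1, y) * W y q.2) ≤ Jalpha α P := by
  classical
  apply le_iInf
  rintro ⟨QX, QY⟩
  -- pushforward of QY through W
  have hQZsum : ∑ z, ∑ y, QY.1 y * W y z = 1 := by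
    rw [Finset.sum_comm]
    calc ∑ y, ∑ z, QY.1 y * W y z = ∑ y, QY.1 y := by
          refine Finset.sum_congr rfl fun y _ => ?_
          rw [← Finset.mul_sum, hW y, mul_one]
      _ = 1 := QY.2
  set QZ : PMFon Z := ⟨fun z => ∑ y, QY.1 y * W y z, hQZsum⟩ with hQZ
  refine iInf_le_of_le (QX, QZ) ?_
  -- the channel from X × Y to X × Z
  set A : X × Y → X × Z → ℝ≥0∞ :=
    fun i o => (if o.1 = i.1 then 1 else 0) * W i.2 o.2 with hAdef
  have hA : ∀ i, ∑ o, A i o = 1 := by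
    rintro ⟨x, y⟩
    rw [Fintype.sum_prod_type]
    calc ∑ x' : X, ∑ z : Z, (if x' = x then 1 else 0) * W y z
        = ∑ x' : X, (if x' = x then 1 else 0) * ∑ z : Z, W y z := by
          refine Finset.sum_congr rfl fun x' _ => ?_
          rw [Finset.mul_sum]
      _ = 1 := by
          simp [hW y]
  have hPf : ∀ i, P i ≠ ⊤ := fun i => sum_one_ne_top hP i
  have hQf : ∀ i : X × Y, QX.1 i.1 * QY.1 i.2 ≠ ⊤ := by
    intro i
    apply ENNReal.mul_ne_top
    · exact sum_one_ne_top QX.2 i.1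
    · exact sum_one_ne_top QY.2 i.2
  have hPmap : (fun o : X × Z => ∑ i : X × Y, P i * A i o)
      = (fun q : X × Z => ∑ y, P (q.1, y) * W y q.2) := by
    funext o
    rw [Fintype.sum_prod_type]
    calc ∑ x : X, ∑ y : Y, P (x, y) * ((if o.1 = x then 1 else 0) * W y o.2)
        = ∑ x : X, if o.1 = x then ∑ y : Y, P (x, y) * W y o.2 else 0 := by
          refine Finset.sum_congr rfl fun x _ => ?_
          by_cases h : o.1 = x <;> simp [h, mul_comm, mul_left_comm, mul_assoc]
      _ = ∑ y, P (o.1, y) * W y o.2 := by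
          rw [Finset.sum_ite_eq univ o.1 (fun x => ∑ y : Y, P (x, y) * W y o.2)]
          simp
  have hQmap : (fun o : X × Z => ∑ i : X × Y, (QX.1 i.1 * QY.1 i.2) * A i o)
      = (fun o : X × Z => QX.1 o.1 * QZ.1 o.2) := by
    funext o
    rw [Fintype.sum_prod_type]
    calc ∑ x : X, ∑ y : Y, (QX.1 x * QY.1 y) * ((if o.1 = x then 1 else 0) * W y o.2)
        = ∑ x : X, if o.1 = x then ∑ y : Y, QX.1 x * (QY.1 y * W y o.2) else 0 := by
          refine Finset.sum_congr rfl fun x _ => ?_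
          by_cases h : o.1 = x <;> simp [h, mul_comm, mul_left_comm, mul_assoc]
      _ = QX.1 o.1 * QZ.1 o.2 := by
          rw [Finset.sum_ite_eq univ o.1 (fun x => ∑ y : Y, QX.1 x * (QY.1 y * W y o.2))]
          simp [hQZ, Finset.mul_sum]
  have := renyi_dpi P (fun i : X × Y => QX.1 i.1 * QY.1 i.2) hPf hQf A hA hα
  rw [hPmap, hQmap] at this
  exact this
end

section
/- If the pairs (X_1,Y_1) and (X_2,Y_2) are independent (P_{X1X2Y1Y2} = P_{X1Y1} ⊗ P_{X2Y2}), then for all α > 0, J_α(X_1,X_2;Y_1,Y_2) = J_α(X_1;Y_1) + J_α(X_2;Y_2). -/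
open scoped ENNReal BigOperators
open Finset

section ERealLemmas

lemma ereal_coe_mul_cancel {c : ℝ} (hc : c ≠ 0) (x : EReal) :
    ((c⁻¹ : ℝ) : EReal) * ((c : ℝ) * x) = x := by
  rw [← mul_assoc, ← EReal.coe_mul, inv_mul_cancel₀ hc, EReal.coe_one, one_mul]

lemma ereal_mul_le_mul_nonpos {c : ℝ} (hc : c ≤ 0) {x y : EReal} (h : x ≤ y) :
    (c : EReal) * y ≤ (c : EReal) * x := by
  have h1 : ((-c : ℝ) : EReal) * x ≤ ((-c : ℝ) : EReal) * y :=
    mul_le_mul_of_nonneg_left h (by exact_mod_cast neg_nonneg.mpr hc)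
  have e : ∀ z : EReal, ((c:ℝ) : EReal) * z = -(((-c:ℝ) : EReal) * z) := by
    intro z
    rw [EReal.coe_neg, neg_mul]
    simp
  rw [e x, e y]
  exact EReal.neg_le_neg_iff.mpr h1

lemma ereal_iInf_mul_pos {ι : Type*} {c : ℝ} (hc : 0 < c) (f : ι → EReal) :
    ⨅ i, (c : EReal) * f i = (c : EReal) * ⨅ i, f i := by
  apply le_antisymm
  · have h : ∀ i, ((c⁻¹ : ℝ) : EReal) * (⨅ j, (c : EReal) * f j) ≤ f i := by
      intro i
      rw [← ereal_coe_mul_cancel hc.ne' (f i)]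
      exact mul_le_mul_of_nonneg_left (iInf_le _ i) (by exact_mod_cast (inv_nonneg.mpr hc.le))
    have h2 : ((c⁻¹ : ℝ) : EReal) * (⨅ j, (c : EReal) * f j) ≤ ⨅ i, f i := le_iInf h
    calc ⨅ j, (c : EReal) * f j
        = (c : EReal) * (((c⁻¹ : ℝ) : EReal) * ⨅ j, (c : EReal) * f j) := by
          rw [← mul_assoc, ← EReal.coe_mul, mul_inv_cancel₀ hc.ne', EReal.coe_one, one_mul]
      _ ≤ (c : EReal) * ⨅ i, f i := mul_le_mul_of_nonneg_left h2 (by exact_mod_cast hc.le)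
  · exact le_iInf fun i => mul_le_mul_of_nonneg_left (iInf_le _ i) (by exact_mod_cast hc.le)

lemma ereal_iInf_mul_neg {ι : Type*} {c : ℝ} (hc : c < 0) (f : ι → EReal) :
    ⨅ i, (c : EReal) * f i = (c : EReal) * ⨆ i, f i := by
  apply le_antisymm
  · have h : ∀ i, f i ≤ ((c⁻¹ : ℝ) : EReal) * (⨅ j, (c : EReal) * f j) := by
      intro i
      rw [← ereal_coe_mul_cancel hc.ne (f i)]
      exact ereal_mul_le_mul_nonpos (inv_nonpos.mpr hc.le) (iInf_le _ i)
    have h2 : (⨆ i, f i) ≤ ((c⁻¹ : ℝ) : EReal) * (⨅ j, (c : EReal) * f j) := iSup_le h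
    calc ⨅ j, (c : EReal) * f j
        = (c : EReal) * (((c⁻¹ : ℝ) : EReal) * ⨅ j, (c : EReal) * f j) := by
          rw [← mul_assoc, ← EReal.coe_mul, mul_inv_cancel₀ hc.ne, EReal.coe_one, one_mul]
      _ ≤ (c : EReal) * ⨆ i, f i := ereal_mul_le_mul_nonpos hc.le h2
  · exact le_iInf fun i => ereal_mul_le_mul_nonpos hc.le (le_iSup _ i)

noncomputable def logIso : ℝ≥0∞ ≃o EReal :=
  StrictMono.orderIsoOfSurjective _ ENNReal.log_strictMono ENNReal.log_surjective

lemma log_iInf {ι : Type*} (f : ι → ℝ≥0∞) :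
    ENNReal.log (⨅ i, f i) = ⨅ i, ENNReal.log (f i) := OrderIso.map_iInf logIso f

lemma log_iSup {ι : Type*} (f : ι → ℝ≥0∞) :
    ENNReal.log (⨆ i, f i) = ⨆ i, ENNReal.log (f i) := OrderIso.map_iSup logIso f

end ERealLemmas

lemma pmf_le_one {A : Type*} [Fintype A] (q : A → ℝ≥0∞) (hq : ∑ x, q x = 1) (x : A) : q x ≤ 1 := by
  rw [← hq]; exact Finset.single_le_sum (fun _ _ => zero_le) (mem_univ x)

lemma pmf_ne_top {A : Type*} [Fintype A] (q : A → ℝ≥0∞) (hq : ∑ x, q x = 1) (x : A) : q x ≠ ⊤ :=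
  fun h => by simpa [h] using pmf_le_one q hq x

lemma pmf_exists_pos {A : Type*} [Fintype A] (q : A → ℝ≥0∞) (hq : ∑ x, q x = 1) :
    ∃ x, q x ≠ 0 := by
  by_contra h
  push_neg at h
  rw [Finset.sum_congr rfl (fun x _ => h x), Finset.sum_const_zero] at hq
  exact one_ne_zero hq.symm

lemma rpow_ne_top' {x : ℝ≥0∞} (hx : x ≠ 0) (hx' : x ≠ ⊤) (y : ℝ) : x ^ y ≠ ⊤ := by
  rw [ne_eq, ENNReal.rpow_eq_top_iff]
  tauto

lemma rpow_ne_zero' {x : ℝ≥0∞} (hx : x ≠ 0) (hx' : x ≠ ⊤) (y : ℝ) : x ^ y ≠ 0 := by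
  rw [ne_eq, ENNReal.rpow_eq_zero_iff]
  tauto

noncomputable def unif (A : Type*) [Fintype A] : A → ℝ≥0∞ := fun _ => (Fintype.card A : ℝ≥0∞)⁻¹

lemma unif_sum {A : Type*} [Fintype A] [Nonempty A] : ∑ x, unif A x = 1 := by
  simp only [unif, Finset.sum_const, Finset.card_univ, nsmul_eq_mul]
  rw [ENNReal.mul_inv_cancel (by exact_mod_cast Fintype.card_ne_zero) (ENNReal.natCast_ne_top _)]

lemma pmf_nonempty {A : Type*} [Fintype A] (q : A → ℝ≥0∞) (hq : ∑ x, q x = 1) : Nonempty A := by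
  obtain ⟨x, _⟩ := pmf_exists_pos q hq
  exact ⟨x⟩

lemma unif_ne_zero {A : Type*} [Fintype A] [Nonempty A] (x : A) : unif A x ≠ 0 := by
  simp [unif, ENNReal.natCast_ne_top]

lemma unif_ne_top' {A : Type*} [Fintype A] [Nonempty A] (x : A) : unif A x ≠ ⊤ := by
  simp only [unif, ne_eq, ENNReal.inv_eq_top, Nat.cast_eq_zero]
  exact Fintype.card_ne_zero


section MargCond
variable {A B : Type*} [Fintype A] [Fintype B]

/-- marginal on first coordinate -/
noncomputable def mrg (Q : A × B → ℝ≥0∞) : A → ℝ≥0∞ := fun a => ∑ b, Q (a, b)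

/-- conditional pmf given the first coordinate -/
noncomputable def cnd (Q : A × B → ℝ≥0∞) : A → B → ℝ≥0∞ :=
  fun a b => if mrg Q a = 0 then unif B b else Q (a, b) / mrg Q a

lemma mrg_sum (Q : A × B → ℝ≥0∞) (hQ : ∑ p, Q p = 1) : ∑ a, mrg Q a = 1 := by
  rw [← hQ, Fintype.sum_prod_type]
  rfl

lemma mrg_ne_top (Q : A × B → ℝ≥0∞) (hQ : ∑ p, Q p = 1) (a : A) : mrg Q a ≠ ⊤ :=
  fun h => by simpa [h] using pmf_le_one _ (mrg_sum Q hQ) a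

lemma cnd_sum [Nonempty B] (Q : A × B → ℝ≥0∞) (hQ : ∑ p, Q p = 1) (a : A) :
    ∑ b, cnd Q a b = 1 := by
  unfold cnd
  by_cases h : mrg Q a = 0
  · simp only [h, if_true]
    simp only [unif, Finset.sum_const, Finset.card_univ, nsmul_eq_mul]
    rw [ENNReal.mul_inv_cancel (by exact_mod_cast Fintype.card_ne_zero) (ENNReal.natCast_ne_top _)]
  · simp only [h, if_false]
    simp only [ENNReal.div_eq_inv_mul]
    rw [← Finset.mul_sum]
    have : ∑ x : B, Q (a, x) = mrg Q a := rfl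
    rw [this, ENNReal.inv_mul_cancel h (mrg_ne_top Q hQ a)]


lemma cnd_mul (Q : A × B → ℝ≥0∞) (hQ : ∑ p, Q p = 1) {a : A} (h : mrg Q a ≠ 0) (b : B) :
    mrg Q a * cnd Q a b = Q (a, b) := by
  unfold cnd
  rw [if_neg h, ENNReal.mul_div_cancel h (mrg_ne_top Q hQ a)]

/-- key pointwise inequality, `α > 1` case -/
lemma cnd_rpow_ge (Q : A × B → ℝ≥0∞) (hQ : ∑ p, Q p = 1) {e : ℝ} (he : e ≤ 0)
    (a : A) (b : B) : mrg Q a ^ e * cnd Q a b ^ e ≤ Q (a, b) ^ e := by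
  by_cases h : mrg Q a = 0
  · have hQ0 : Q (a, b) = 0 := by
      have : Q (a, b) ≤ mrg Q a :=
        Finset.single_le_sum (f := fun b => Q (a, b)) (fun _ _ => zero_le) (mem_univ b)
      simpa [h] using this
    rcases eq_or_lt_of_le he with rfl | he'
    · simp
    · rw [hQ0, ENNReal.rpow_eq_top_iff.mpr (Or.inl ⟨rfl, he'⟩)]
      exact le_top
  · rw [← cnd_mul Q hQ h b, ENNReal.mul_rpow_of_ne_top (mrg_ne_top Q hQ a) ?ht]
    unfold cnd
    rw [if_neg h]
    refine (ENNReal.div_lt_top (fun hh => ?_) h).ne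
    exact ((pmf_le_one Q hQ (a,b)).trans_lt (hh ▸ ENNReal.one_lt_top)).ne rfl

/-- key pointwise inequality, `α < 1` case -/
lemma cnd_rpow_le (Q : A × B → ℝ≥0∞) (hQ : ∑ p, Q p = 1) {e : ℝ} (he : 0 ≤ e)
    (a : A) (b : B) : Q (a, b) ^ e ≤ mrg Q a ^ e * cnd Q a b ^ e := by
  by_cases h : mrg Q a = 0
  · have hQ0 : Q (a, b) = 0 := by
      have : Q (a, b) ≤ mrg Q a :=
        Finset.single_le_sum (f := fun b => Q (a, b)) (fun _ _ => zero_le) (mem_univ b)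
      simpa [h] using this
    rcases eq_or_lt_of_le he with rfl | he'
    · simp
    · rw [hQ0, ENNReal.zero_rpow_of_pos he']
      exact zero_le
  · rw [← cnd_mul Q hQ h b, ENNReal.mul_rpow_of_ne_top (mrg_ne_top Q hQ a) ?ht]
    unfold cnd
    rw [if_neg h]
    refine (ENNReal.div_lt_top (fun hh => ?_) h).ne
    exact ((pmf_le_one Q hQ (a,b)).trans_lt (hh ▸ ENNReal.one_lt_top)).ne rfl

end MargCond

lemma sum_reindex4 {A B C D M : Type*} [Fintype A] [Fintype B] [Fintype C] [Fintype D]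
    [AddCommMonoid M] (F : (A × B) × (C × D) → M) :
    ∑ q, F q = ∑ p : (A × C) × (B × D), F ((p.1.1, p.2.1), (p.1.2, p.2.2)) := by
  apply Fintype.sum_equiv (Equiv.prodProdProdComm A B C D)
  intro q
  rfl

lemma sum_factor {A C B D : Type*} [Fintype A] [Fintype B] [Fintype C] [Fintype D]
    (f : A × C → ℝ≥0∞) (g : B × D → ℝ≥0∞) :
    ∑ q : (A × B) × (C × D), f (q.1.1, q.2.1) * g (q.1.2, q.2.2)
      = (∑ p, f p) * (∑ p, g p) := by
  rw [sum_reindex4 (fun q : (A×B)×(C×D) => f (q.1.1, q.2.1) * g (q.1.2, q.2.2))]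
  rw [Fintype.sum_prod_type]
  simp only [← Finset.sum_mul, ← Finset.mul_sum]

lemma cnd_ne_top {A B : Type*} [Fintype A] [Fintype B] [Nonempty B]
    (Q : A × B → ℝ≥0∞) (hQ : ∑ p, Q p = 1) (a : A) (b : B) : cnd Q a b ≠ ⊤ := by
  unfold cnd
  split_ifs with h
  · simp only [unif, ne_eq, ENNReal.inv_eq_top, Nat.cast_eq_zero]
    exact Fintype.card_ne_zero
  · refine (ENNReal.div_lt_top (fun hh => ?_) h).ne
    exact ((pmf_le_one Q hQ (a,b)).trans_lt (hh ▸ ENNReal.one_lt_top)).ne rfl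

noncomputable def Sfun {X Y : Type*} [Fintype X] [Fintype Y] (α : ℝ) (P : X × Y → ℝ≥0∞)
    (q1 : X → ℝ≥0∞) (q2 : Y → ℝ≥0∞) : ℝ≥0∞ :=
  ∑ p, P p ^ α * (q1 p.1 * q2 p.2) ^ (1 - α)

section Core
variable {X1 Y1 X2 Y2 : Type*} [Fintype X1] [Fintype X2] [Fintype Y1] [Fintype Y2]

lemma Sfun_prod (α : ℝ) (hα : 0 ≤ α) (P1 : X1 × Y1 → ℝ≥0∞) (P2 : X2 × Y2 → ℝ≥0∞)
    (a1 : X1 → ℝ≥0∞) (a2 : X2 → ℝ≥0∞) (b1 : Y1 → ℝ≥0∞) (b2 : Y2 → ℝ≥0∞)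
    (ha1 : ∀ x, a1 x ≠ ⊤) (ha2 : ∀ x, a2 x ≠ ⊤) (hb1 : ∀ y, b1 y ≠ ⊤) (hb2 : ∀ y, b2 y ≠ ⊤) :
    Sfun α (fun q : (X1 × X2) × (Y1 × Y2) => P1 (q.1.1, q.2.1) * P2 (q.1.2, q.2.2))
        (fun x => a1 x.1 * a2 x.2) (fun y => b1 y.1 * b2 y.2)
      = Sfun α P1 a1 b1 * Sfun α P2 a2 b2 := by
  unfold Sfun
  rw [← sum_factor (fun p : X1 × Y1 => P1 p ^ α * (a1 p.1 * b1 p.2) ^ (1-α))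
        (fun p : X2 × Y2 => P2 p ^ α * (a2 p.1 * b2 p.2) ^ (1-α))]
  apply Finset.sum_congr rfl
  intro q _
  rw [ENNReal.mul_rpow_of_nonneg _ _ hα,
    show (a1 q.1.1 * a2 q.1.2 * (b1 q.2.1 * b2 q.2.2)) = (a1 q.1.1 * b1 q.2.1) * (a2 q.1.2 * b2 q.2.2) by ring,
    ENNReal.mul_rpow_of_ne_top (ENNReal.mul_ne_top (ha1 _) (hb1 _)) (ENNReal.mul_ne_top (ha2 _) (hb2 _))]
  ring

variable (P1 : X1 × Y1 → ℝ≥0∞) (P2 : X2 × Y2 → ℝ≥0∞)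
  (QX : X1 × X2 → ℝ≥0∞) (QY : Y1 × Y2 → ℝ≥0∞)

lemma core_ge [Nonempty X2] [Nonempty Y2] (α : ℝ) (hα : 0 ≤ α) (he : 1 - α ≤ 0)
    (hQX : ∑ p, QX p = 1) (hQY : ∑ p, QY p = 1)
    (I1 I2 : ℝ≥0∞)
    (hI1 : ∀ (c1 : X1 → ℝ≥0∞) (c2 : Y1 → ℝ≥0∞), ∑ x, c1 x = 1 → ∑ y, c2 y = 1 →
      I1 ≤ Sfun α P1 c1 c2)
    (hI2 : ∀ (c1 : X2 → ℝ≥0∞) (c2 : Y2 → ℝ≥0∞), ∑ x, c1 x = 1 → ∑ y, c2 y = 1 →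
      I2 ≤ Sfun α P2 c1 c2) :
    I1 * I2 ≤ Sfun α (fun q : (X1 × X2) × (Y1 × Y2) => P1 (q.1.1, q.2.1) * P2 (q.1.2, q.2.2))
        (fun x => QX x) (fun y => QY y) := by
  set e := 1 - α with he_def
  set F : X1 × Y1 → ℝ≥0∞ := fun p => P1 p ^ α * (mrg QX p.1 * mrg QY p.2) ^ e with hF
  set G : X1 × Y1 → X2 × Y2 → ℝ≥0∞ :=
    fun p1 p2 => P2 p2 ^ α * (cnd QX p1.1 p2.1 * cnd QY p1.2 p2.2) ^ e with hG
  have key : ∀ q : (X1 × X2) × (Y1 × Y2),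
      F (q.1.1, q.2.1) * G (q.1.1, q.2.1) (q.1.2, q.2.2)
        ≤ (P1 (q.1.1, q.2.1) * P2 (q.1.2, q.2.2)) ^ α * (QX q.1 * QY q.2) ^ e := by
    intro q
    have h1 : mrg QX q.1.1 ^ e * cnd QX q.1.1 q.1.2 ^ e ≤ QX q.1 ^ e :=
      cnd_rpow_ge QX hQX he q.1.1 q.1.2
    have h2 : mrg QY q.2.1 ^ e * cnd QY q.2.1 q.2.2 ^ e ≤ QY q.2 ^ e :=
      cnd_rpow_ge QY hQY he q.2.1 q.2.2
    calc F (q.1.1, q.2.1) * G (q.1.1, q.2.1) (q.1.2, q.2.2)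
        = (P1 (q.1.1, q.2.1) ^ α * P2 (q.1.2, q.2.2) ^ α) *
            ((mrg QX q.1.1 ^ e * cnd QX q.1.1 q.1.2 ^ e) *
             (mrg QY q.2.1 ^ e * cnd QY q.2.1 q.2.2 ^ e)) := by
          simp only [hF, hG]
          rw [ENNReal.mul_rpow_of_ne_top (mrg_ne_top QX hQX _) (mrg_ne_top QY hQY _),
            ENNReal.mul_rpow_of_ne_top (cnd_ne_top QX hQX _ _) (cnd_ne_top QY hQY _ _)]
          ring
      _ ≤ (P1 (q.1.1, q.2.1) ^ α * P2 (q.1.2, q.2.2) ^ α) * (QX q.1 ^ e * QY q.2 ^ e) :=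
          mul_le_mul' le_rfl (mul_le_mul' h1 h2)
      _ = (P1 (q.1.1, q.2.1) * P2 (q.1.2, q.2.2)) ^ α * (QX q.1 * QY q.2) ^ e := by
          rw [ENNReal.mul_rpow_of_nonneg _ _ hα,
            ENNReal.mul_rpow_of_ne_top (pmf_ne_top QX hQX _) (pmf_ne_top QY hQY _)]
  calc I1 * I2
      ≤ Sfun α P1 (mrg QX) (mrg QY) * I2 := by
        exact mul_le_mul' (hI1 _ _ (mrg_sum QX hQX) (mrg_sum QY hQY)) le_rfl
    _ = ∑ p1 : X1 × Y1, F p1 * I2 := by rw [← Finset.sum_mul]; rfl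
    _ ≤ ∑ p1 : X1 × Y1, F p1 * Sfun α P2 (cnd QX p1.1) (cnd QY p1.2) := by
        refine Finset.sum_le_sum fun p1 _ => mul_le_mul' le_rfl ?_
        exact hI2 _ _ (cnd_sum QX hQX p1.1) (cnd_sum QY hQY p1.2)
    _ = ∑ p1 : X1 × Y1, ∑ p2 : X2 × Y2, F p1 * G p1 p2 := by
        refine Finset.sum_congr rfl fun p1 _ => ?_
        simp only [Sfun, Finset.mul_sum]
        rfl
    _ = ∑ q : (X1 × X2) × (Y1 × Y2), F (q.1.1, q.2.1) * G (q.1.1, q.2.1) (q.1.2, q.2.2) := by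
        conv_rhs => rw [sum_reindex4 (fun q : (X1×X2)×(Y1×Y2) => F (q.1.1, q.2.1) * G (q.1.1, q.2.1) (q.1.2, q.2.2))]
        exact (Fintype.sum_prod_type (fun p : (X1×Y1)×(X2×Y2) => F p.1 * G p.1 p.2)).symm
    _ ≤ _ := Finset.sum_le_sum fun q _ => key q

lemma core_le [Nonempty X2] [Nonempty Y2] (α : ℝ) (hα : 0 ≤ α) (he : 0 ≤ 1 - α)
    (hQX : ∑ p, QX p = 1) (hQY : ∑ p, QY p = 1)
    (I1 I2 : ℝ≥0∞)
    (hI1 : ∀ (c1 : X1 → ℝ≥0∞) (c2 : Y1 → ℝ≥0∞), ∑ x, c1 x = 1 → ∑ y, c2 y = 1 →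
      Sfun α P1 c1 c2 ≤ I1)
    (hI2 : ∀ (c1 : X2 → ℝ≥0∞) (c2 : Y2 → ℝ≥0∞), ∑ x, c1 x = 1 → ∑ y, c2 y = 1 →
      Sfun α P2 c1 c2 ≤ I2) :
    Sfun α (fun q : (X1 × X2) × (Y1 × Y2) => P1 (q.1.1, q.2.1) * P2 (q.1.2, q.2.2))
        (fun x => QX x) (fun y => QY y) ≤ I1 * I2 := by
  set e := 1 - α with he_def
  set F : X1 × Y1 → ℝ≥0∞ := fun p => P1 p ^ α * (mrg QX p.1 * mrg QY p.2) ^ e with hF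
  set G : X1 × Y1 → X2 × Y2 → ℝ≥0∞ :=
    fun p1 p2 => P2 p2 ^ α * (cnd QX p1.1 p2.1 * cnd QY p1.2 p2.2) ^ e with hG
  have key : ∀ q : (X1 × X2) × (Y1 × Y2),
      (P1 (q.1.1, q.2.1) * P2 (q.1.2, q.2.2)) ^ α * (QX q.1 * QY q.2) ^ e
        ≤ F (q.1.1, q.2.1) * G (q.1.1, q.2.1) (q.1.2, q.2.2) := by
    intro q
    have h1 : QX q.1 ^ e ≤ mrg QX q.1.1 ^ e * cnd QX q.1.1 q.1.2 ^ e :=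
      cnd_rpow_le QX hQX he q.1.1 q.1.2
    have h2 : QY q.2 ^ e ≤ mrg QY q.2.1 ^ e * cnd QY q.2.1 q.2.2 ^ e :=
      cnd_rpow_le QY hQY he q.2.1 q.2.2
    calc (P1 (q.1.1, q.2.1) * P2 (q.1.2, q.2.2)) ^ α * (QX q.1 * QY q.2) ^ e
        = (P1 (q.1.1, q.2.1) ^ α * P2 (q.1.2, q.2.2) ^ α) * (QX q.1 ^ e * QY q.2 ^ e) := by
          rw [ENNReal.mul_rpow_of_nonneg _ _ hα,
            ENNReal.mul_rpow_of_ne_top (pmf_ne_top QX hQX _) (pmf_ne_top QY hQY _)]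
      _ ≤ (P1 (q.1.1, q.2.1) ^ α * P2 (q.1.2, q.2.2) ^ α) *
            ((mrg QX q.1.1 ^ e * cnd QX q.1.1 q.1.2 ^ e) *
             (mrg QY q.2.1 ^ e * cnd QY q.2.1 q.2.2 ^ e)) :=
          mul_le_mul' le_rfl (mul_le_mul' h1 h2)
      _ = F (q.1.1, q.2.1) * G (q.1.1, q.2.1) (q.1.2, q.2.2) := by
          simp only [hF, hG]
          rw [ENNReal.mul_rpow_of_ne_top (mrg_ne_top QX hQX _) (mrg_ne_top QY hQY _),
            ENNReal.mul_rpow_of_ne_top (cnd_ne_top QX hQX _ _) (cnd_ne_top QY hQY _ _)]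
          ring
  calc Sfun α (fun q : (X1 × X2) × (Y1 × Y2) => P1 (q.1.1, q.2.1) * P2 (q.1.2, q.2.2))
        (fun x => QX x) (fun y => QY y)
      ≤ ∑ q : (X1 × X2) × (Y1 × Y2), F (q.1.1, q.2.1) * G (q.1.1, q.2.1) (q.1.2, q.2.2) :=
        Finset.sum_le_sum fun q _ => key q
    _ = ∑ p1 : X1 × Y1, ∑ p2 : X2 × Y2, F p1 * G p1 p2 := by
        conv_lhs => rw [sum_reindex4 (fun q : (X1×X2)×(Y1×Y2) => F (q.1.1, q.2.1) * G (q.1.1, q.2.1) (q.1.2, q.2.2))]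
        exact Fintype.sum_prod_type (fun p : (X1×Y1)×(X2×Y2) => F p.1 * G p.1 p.2)
    _ = ∑ p1 : X1 × Y1, F p1 * Sfun α P2 (cnd QX p1.1) (cnd QY p1.2) := by
        refine Finset.sum_congr rfl fun p1 _ => ?_
        simp only [Sfun, Finset.mul_sum]
        rfl
    _ ≤ ∑ p1 : X1 × Y1, F p1 * I2 := by
        refine Finset.sum_le_sum fun p1 _ => mul_le_mul' le_rfl ?_
        exact hI2 _ _ (cnd_sum QX hQX p1.1) (cnd_sum QY hQY p1.2)
    _ = Sfun α P1 (mrg QX) (mrg QY) * I2 := by rw [← Finset.sum_mul]; rfl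
    _ ≤ I1 * I2 := mul_le_mul' (hI1 _ _ (mrg_sum QX hQX) (mrg_sum QY hQY)) le_rfl

end Core

section Char
variable {X Y : Type*} [Fintype X] [Fintype Y]

instance pmfon_nonempty [Nonempty X] : Nonempty (PMFon X) :=
  ⟨⟨unif X, by
    simp only [unif, Finset.sum_const, Finset.card_univ, nsmul_eq_mul]
    rw [ENNReal.mul_inv_cancel (by exact_mod_cast Fintype.card_ne_zero) (ENNReal.natCast_ne_top _)]⟩⟩

lemma renyiDiv_eq_S {α : ℝ} (hne : α ≠ 1) (P : X × Y → ℝ≥0∞) (Q : PMFon X × PMFon Y) :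
    renyiDiv α P (fun p => Q.1.1 p.1 * Q.2.1 p.2)
      = (((α - 1)⁻¹ : ℝ) : EReal) * ENNReal.log (Sfun α P Q.1.1 Q.2.1) := by
  rw [renyiDiv, if_neg hne]; rfl

lemma Jalpha_gt {α : ℝ} (hα : 1 < α) (P : X × Y → ℝ≥0∞) :
    Jalpha α P = (((α - 1)⁻¹ : ℝ) : EReal) *
      ENNReal.log (⨅ Q : PMFon X × PMFon Y, Sfun α P Q.1.1 Q.2.1) := by
  unfold Jalpha
  simp only [renyiDiv_eq_S (ne_of_gt hα)]
  rw [ereal_iInf_mul_pos (inv_pos.mpr (sub_pos.mpr hα)), log_iInf]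

lemma Jalpha_lt {α : ℝ} (hα : α < 1) (P : X × Y → ℝ≥0∞) :
    Jalpha α P = (((α - 1)⁻¹ : ℝ) : EReal) *
      ENNReal.log (⨆ Q : PMFon X × PMFon Y, Sfun α P Q.1.1 Q.2.1) := by
  unfold Jalpha
  simp only [renyiDiv_eq_S (ne_of_lt hα)]
  rw [ereal_iInf_mul_neg (inv_neg''.mpr (sub_neg.mpr hα)), log_iSup]

variable {α : ℝ} (P : X × Y → ℝ≥0∞)

/-- lower bound for the `α > 1` case -/
lemma Sfun_ge (hα : 0 ≤ α) (he : 1 - α ≤ 0) (hP : ∑ p, P p = 1)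
    {p0 : X × Y} (h0 : P p0 ≠ 0)
    (q1 : X → ℝ≥0∞) (q2 : Y → ℝ≥0∞) (h1 : ∑ x, q1 x = 1) (h2 : ∑ y, q2 y = 1) :
    P p0 ^ α ≤ Sfun α P q1 q2 := by
  have : P p0 ^ α * (q1 p0.1 * q2 p0.2) ^ (1 - α) ≤ Sfun α P q1 q2 :=
    Finset.single_le_sum (f := fun p => P p ^ α * (q1 p.1 * q2 p.2) ^ (1-α))
      (fun _ _ => zero_le) (mem_univ p0)
  refine le_trans ?_ this
  have hq : q1 p0.1 * q2 p0.2 ≤ 1 :=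
    mul_le_one' (pmf_le_one q1 h1 p0.1) (pmf_le_one q2 h2 p0.2)
  have : (1 : ℝ≥0∞) ≤ (q1 p0.1 * q2 p0.2) ^ (1 - α) := by
    calc (1:ℝ≥0∞) = (q1 p0.1 * q2 p0.2) ^ (0:ℝ) := ENNReal.rpow_zero.symm
    _ ≤ _ := ENNReal.rpow_le_rpow_of_exponent_ge hq he
  calc P p0 ^ α = P p0 ^ α * 1 := (mul_one _).symm
  _ ≤ _ := mul_le_mul' le_rfl this

lemma Sfun_unif_ne_top [Nonempty X] [Nonempty Y] (hα : 0 ≤ α) (hP : ∑ p, P p = 1) :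
    Sfun α P (unif X) (unif Y) ≠ ⊤ := by
  refine (ENNReal.sum_lt_top.mpr fun p _ => ?_).ne
  rw [lt_top_iff_ne_top]
  refine ENNReal.mul_ne_top ?_ ?_
  · exact ENNReal.rpow_ne_top_of_nonneg hα (pmf_ne_top P hP p)
  · exact rpow_ne_top' (mul_ne_zero (unif_ne_zero p.1) (unif_ne_zero p.2))
      (ENNReal.mul_ne_top (unif_ne_top' p.1) (unif_ne_top' p.2)) _

lemma Sfun_le_card (hα : 0 ≤ α) (he : 0 ≤ 1 - α) (hP : ∑ p, P p = 1)
    (q1 : X → ℝ≥0∞) (q2 : Y → ℝ≥0∞) (h1 : ∑ x, q1 x = 1) (h2 : ∑ y, q2 y = 1) :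
    Sfun α P q1 q2 ≤ (Fintype.card (X × Y) : ℝ≥0∞) := by
  calc Sfun α P q1 q2 ≤ ∑ _p : X × Y, 1 := by
        refine Finset.sum_le_sum fun p _ => ?_
        calc P p ^ α * (q1 p.1 * q2 p.2) ^ (1-α)
            ≤ 1 * 1 := mul_le_mul' (ENNReal.rpow_le_one (pmf_le_one P hP p) hα)
              (ENNReal.rpow_le_one (mul_le_one' (pmf_le_one q1 h1 p.1) (pmf_le_one q2 h2 p.2)) he)
          _ = 1 := one_mul 1
    _ = (Fintype.card (X × Y) : ℝ≥0∞) := by simp [Finset.card_univ]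

lemma Sfun_unif_pos [Nonempty X] [Nonempty Y] (hP : ∑ p, P p = 1) :
    0 < Sfun α P (unif X) (unif Y) := by
  obtain ⟨p0, h0⟩ := pmf_exists_pos P hP
  have hterm : 0 < P p0 ^ α * (unif X p0.1 * unif Y p0.2) ^ (1 - α) := by
    refine ENNReal.mul_pos ?_ ?_
    · exact rpow_ne_zero' h0 (pmf_ne_top P hP p0) α
    · exact rpow_ne_zero' (mul_ne_zero (unif_ne_zero p0.1) (unif_ne_zero p0.2))
        (ENNReal.mul_ne_top (unif_ne_top' p0.1) (unif_ne_top' p0.2)) _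
  exact hterm.trans_le (Finset.single_le_sum (f := fun p => P p ^ α * (unif X p.1 * unif Y p.2) ^ (1-α))
    (fun _ _ => zero_le) (mem_univ p0))

end Char

lemma ennreal_le_mul_of_forall {a b c : ℝ≥0∞} (hb : b ≠ ⊤) (hc : c ≠ ⊤)
    (h : ∀ ε : ℝ≥0∞, 0 < ε → ε ≠ ⊤ → a ≤ (b + ε) * (c + ε)) : a ≤ b * c := by
  refine ENNReal.le_of_forall_pos_le_add fun δ hδ _ => ?_
  set ε : ℝ≥0∞ := min 1 ((δ : ℝ≥0∞) / (b + c + 1)) with hε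
  have hbc1 : b + c + 1 ≠ 0 := by simp
  have hbc2 : b + c + 1 ≠ ⊤ := by
    simp [ENNReal.add_eq_top, hb, hc]
  have hε0 : 0 < ε := by
    refine lt_min one_pos ?_
    exact ENNReal.div_pos (by exact_mod_cast hδ.ne') hbc2
  have hεt : ε ≠ ⊤ := by
    refine ne_top_of_le_ne_top ?_ (min_le_left _ _)
    exact ENNReal.one_ne_top
  refine (h ε hε0 hεt).trans ?_
  have expand : (b + ε) * (c + ε) = b * c + (ε * c + b * ε + ε * ε) := by ring
  rw [expand]
  refine add_le_add le_rfl ?_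
  have h1 : ε * c + b * ε + ε * ε ≤ ε * (b + c + 1) := by
    have hee : ε * ε ≤ ε * 1 := mul_le_mul' le_rfl (min_le_left _ _)
    calc ε * c + b * ε + ε * ε ≤ ε * c + ε * b + ε * 1 := by
          rw [mul_comm b ε]; exact add_le_add le_rfl hee
      _ = ε * (b + c + 1) := by ring
  refine h1.trans ?_
  calc ε * (b + c + 1) ≤ ((δ : ℝ≥0∞) / (b + c + 1)) * (b + c + 1) :=
        mul_le_mul' (min_le_right _ _) le_rfl
    _ = (δ : ℝ≥0∞) := ENNReal.div_mul_cancel hbc1 hbc2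

section ProdPMF
variable {A B : Type*} [Fintype A] [Fintype B]

lemma prod_pmf_sum (c1 : A → ℝ≥0∞) (c2 : B → ℝ≥0∞) (h1 : ∑ x, c1 x = 1) (h2 : ∑ x, c2 x = 1) :
    ∑ p : A × B, c1 p.1 * c2 p.2 = 1 := by
  rw [Fintype.sum_prod_type]
  simp only [← Finset.mul_sum, ← Finset.sum_mul, h1, h2, mul_one]

/-- product element of `PMFon` -/
noncomputable def prodPMF (c1 : PMFon A) (c2 : PMFon B) : PMFon (A × B) :=
  ⟨fun p => c1.1 p.1 * c2.1 p.2, prod_pmf_sum c1.1 c2.1 c1.2 c2.2⟩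

end ProdPMF

section InfProd
variable {X1 Y1 X2 Y2 : Type*} [Fintype X1] [Fintype X2] [Fintype Y1] [Fintype Y2]
variable (α : ℝ) (P1 : X1 × Y1 → ℝ≥0∞) (P2 : X2 × Y2 → ℝ≥0∞)

lemma Sfun_prodPMF (hα : 0 ≤ α) (Q1 : PMFon X1 × PMFon Y1) (Q2 : PMFon X2 × PMFon Y2) :
    Sfun α (fun q : (X1 × X2) × (Y1 × Y2) => P1 (q.1.1, q.2.1) * P2 (q.1.2, q.2.2))
      (prodPMF Q1.1 Q2.1).1 (prodPMF Q1.2 Q2.2).1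
    = Sfun α P1 Q1.1.1 Q1.2.1 * Sfun α P2 Q2.1.1 Q2.2.1 := by
  exact Sfun_prod α hα P1 P2 _ _ _ _
    (fun x => pmf_ne_top _ Q1.1.2 x) (fun x => pmf_ne_top _ Q2.1.2 x)
    (fun y => pmf_ne_top _ Q1.2.2 y) (fun y => pmf_ne_top _ Q2.2.2 y)

lemma iInf_S_prod (hP1 : ∑ p, P1 p = 1) (hP2 : ∑ p, P2 p = 1) (hα1 : 1 < α) :
    (⨅ Q : PMFon (X1 × X2) × PMFon (Y1 × Y2),
        Sfun α (fun q : (X1 × X2) × (Y1 × Y2) => P1 (q.1.1, q.2.1) * P2 (q.1.2, q.2.2))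
          Q.1.1 Q.2.1)
      = (⨅ Q : PMFon X1 × PMFon Y1, Sfun α P1 Q.1.1 Q.2.1)
        * (⨅ Q : PMFon X2 × PMFon Y2, Sfun α P2 Q.1.1 Q.2.1) := by
  have hα0 : (0:ℝ) ≤ α := by linarith
  have he : 1 - α ≤ 0 := by linarith
  haveI h12 : Nonempty (X1 × Y1) := pmf_nonempty P1 hP1
  haveI h34 : Nonempty (X2 × Y2) := pmf_nonempty P2 hP2
  haveI : Nonempty X1 := ⟨(Classical.arbitrary (X1 × Y1)).1⟩
  haveI : Nonempty Y1 := ⟨(Classical.arbitrary (X1 × Y1)).2⟩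
  haveI : Nonempty X2 := ⟨(Classical.arbitrary (X2 × Y2)).1⟩
  haveI : Nonempty Y2 := ⟨(Classical.arbitrary (X2 × Y2)).2⟩
  set I1 := ⨅ Q : PMFon X1 × PMFon Y1, Sfun α P1 Q.1.1 Q.2.1 with hI1
  set I2 := ⨅ Q : PMFon X2 × PMFon Y2, Sfun α P2 Q.1.1 Q.2.1 with hI2
  have hI1top : I1 ≠ ⊤ := by
    refine ne_top_of_le_ne_top (Sfun_unif_ne_top P1 hα0 hP1) ?_
    exact iInf_le _ (⟨⟨unif X1, unif_sum⟩, ⟨unif Y1, unif_sum⟩⟩ : PMFon X1 × PMFon Y1)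
  have hI2top : I2 ≠ ⊤ := by
    refine ne_top_of_le_ne_top (Sfun_unif_ne_top P2 hα0 hP2) ?_
    exact iInf_le _ (⟨⟨unif X2, unif_sum⟩, ⟨unif Y2, unif_sum⟩⟩ : PMFon X2 × PMFon Y2)
  apply le_antisymm
  · -- ⨅ big ≤ I1 * I2 by ε-approximation
    refine ennreal_le_mul_of_forall hI1top hI2top fun ε hε hεt => ?_
    have h1 : I1 < I1 + ε := ENNReal.lt_add_right hI1top hε.ne'
    have h2 : I2 < I2 + ε := ENNReal.lt_add_right hI2top hε.ne'
    obtain ⟨Q1, hQ1⟩ := iInf_lt_iff.mp h1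
    obtain ⟨Q2, hQ2⟩ := iInf_lt_iff.mp h2
    refine le_trans (iInf_le _ (⟨prodPMF Q1.1 Q2.1, prodPMF Q1.2 Q2.2⟩ :
      PMFon (X1 × X2) × PMFon (Y1 × Y2))) ?_
    rw [Sfun_prodPMF α P1 P2 hα0 Q1 Q2]
    exact mul_le_mul' hQ1.le hQ2.le
  · -- I1 * I2 ≤ each big S
    refine le_iInf fun Q => ?_
    refine core_ge P1 P2 Q.1.1 Q.2.1 α hα0 he Q.1.2 Q.2.2 I1 I2 ?_ ?_
    · intro c1 c2 h1 h2
      exact iInf_le (fun Q : PMFon X1 × PMFon Y1 => Sfun α P1 Q.1.1 Q.2.1) ⟨⟨c1, h1⟩, ⟨c2, h2⟩⟩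
    · intro c1 c2 h1 h2
      exact iInf_le (fun Q : PMFon X2 × PMFon Y2 => Sfun α P2 Q.1.1 Q.2.1) ⟨⟨c1, h1⟩, ⟨c2, h2⟩⟩

lemma iSup_S_prod (hP1 : ∑ p, P1 p = 1) (hP2 : ∑ p, P2 p = 1) (hα1 : α < 1) (hα0 : 0 ≤ α) :
    (⨆ Q : PMFon (X1 × X2) × PMFon (Y1 × Y2),
        Sfun α (fun q : (X1 × X2) × (Y1 × Y2) => P1 (q.1.1, q.2.1) * P2 (q.1.2, q.2.2))
          Q.1.1 Q.2.1)
      = (⨆ Q : PMFon X1 × PMFon Y1, Sfun α P1 Q.1.1 Q.2.1)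
        * (⨆ Q : PMFon X2 × PMFon Y2, Sfun α P2 Q.1.1 Q.2.1) := by
  have he : 0 ≤ 1 - α := by linarith
  haveI h12 : Nonempty (X1 × Y1) := pmf_nonempty P1 hP1
  haveI h34 : Nonempty (X2 × Y2) := pmf_nonempty P2 hP2
  haveI : Nonempty X2 := ⟨(Classical.arbitrary (X2 × Y2)).1⟩
  haveI : Nonempty Y2 := ⟨(Classical.arbitrary (X2 × Y2)).2⟩
  apply le_antisymm
  · refine iSup_le fun Q => ?_
    refine core_le P1 P2 Q.1.1 Q.2.1 α hα0 he Q.1.2 Q.2.2 _ _ ?_ ?_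
    · intro c1 c2 h1 h2
      exact le_iSup (fun Q : PMFon X1 × PMFon Y1 => Sfun α P1 Q.1.1 Q.2.1) ⟨⟨c1, h1⟩, ⟨c2, h2⟩⟩
    · intro c1 c2 h1 h2
      exact le_iSup (fun Q : PMFon X2 × PMFon Y2 => Sfun α P2 Q.1.1 Q.2.1) ⟨⟨c1, h1⟩, ⟨c2, h2⟩⟩
  · rw [ENNReal.iSup_mul]
    refine iSup_le fun Q1 => ?_
    rw [ENNReal.mul_iSup]
    refine iSup_le fun Q2 => ?_
    refine le_iSup_of_le (⟨prodPMF Q1.1 Q2.1, prodPMF Q1.2 Q2.2⟩ :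
      PMFon (X1 × X2) × PMFon (Y1 × Y2)) ?_
    exact le_of_eq (Sfun_prodPMF α P1 P2 hα0 Q1 Q2).symm

end InfProd

lemma ereal_mul_add_real (c r1 r2 : ℝ) :
    (c : EReal) * ((r1 : EReal) + (r2 : EReal))
      = (c : EReal) * (r1 : EReal) + (c : EReal) * (r2 : EReal) := by
  norm_cast
  ring

section Assemble
variable {X1 X2 Y1 Y2 : Type*} [Fintype X1] [Fintype X2] [Fintype Y1] [Fintype Y2]
variable (P1 : X1 × Y1 → ℝ≥0∞) (P2 : X2 × Y2 → ℝ≥0∞)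

lemma stmt5_gt (hP1 : ∑ p, P1 p = 1) (hP2 : ∑ p, P2 p = 1) {α : ℝ} (hα : 1 < α) :
    Jalpha α (fun q : (X1 × X2) × (Y1 × Y2) => P1 (q.1.1, q.2.1) * P2 (q.1.2, q.2.2)) =
      Jalpha α P1 + Jalpha α P2 := by
  have hα0 : (0:ℝ) ≤ α := by linarith
  have he : 1 - α ≤ 0 := by linarith
  haveI h12 : Nonempty (X1 × Y1) := pmf_nonempty P1 hP1
  haveI h34 : Nonempty (X2 × Y2) := pmf_nonempty P2 hP2
  haveI : Nonempty X1 := ⟨(Classical.arbitrary (X1 × Y1)).1⟩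
  haveI : Nonempty Y1 := ⟨(Classical.arbitrary (X1 × Y1)).2⟩
  haveI : Nonempty X2 := ⟨(Classical.arbitrary (X2 × Y2)).1⟩
  haveI : Nonempty Y2 := ⟨(Classical.arbitrary (X2 × Y2)).2⟩
  set I1 := ⨅ Q : PMFon X1 × PMFon Y1, Sfun α P1 Q.1.1 Q.2.1 with hI1
  set I2 := ⨅ Q : PMFon X2 × PMFon Y2, Sfun α P2 Q.1.1 Q.2.1 with hI2
  have hI1top : I1 ≠ ⊤ := by
    refine ne_top_of_le_ne_top (Sfun_unif_ne_top P1 hα0 hP1) ?_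
    exact iInf_le _ (⟨⟨unif X1, unif_sum⟩, ⟨unif Y1, unif_sum⟩⟩ : PMFon X1 × PMFon Y1)
  have hI2top : I2 ≠ ⊤ := by
    refine ne_top_of_le_ne_top (Sfun_unif_ne_top P2 hα0 hP2) ?_
    exact iInf_le _ (⟨⟨unif X2, unif_sum⟩, ⟨unif Y2, unif_sum⟩⟩ : PMFon X2 × PMFon Y2)
  obtain ⟨p1, hp1⟩ := pmf_exists_pos P1 hP1
  obtain ⟨p2, hp2⟩ := pmf_exists_pos P2 hP2
  have hI1pos : 0 < I1 := by
    refine lt_of_lt_of_le ?_ (le_iInf fun Q => Sfun_ge P1 hα0 he hP1 hp1 _ _ Q.1.2 Q.2.2)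
    exact (rpow_ne_zero' hp1 (pmf_ne_top P1 hP1 p1) α).bot_lt
  have hI2pos : 0 < I2 := by
    refine lt_of_lt_of_le ?_ (le_iInf fun Q => Sfun_ge P2 hα0 he hP2 hp2 _ _ Q.1.2 Q.2.2)
    exact (rpow_ne_zero' hp2 (pmf_ne_top P2 hP2 p2) α).bot_lt
  rw [Jalpha_gt hα, Jalpha_gt hα, Jalpha_gt hα, iInf_S_prod α P1 P2 hP1 hP2 hα,
    ENNReal.log_mul_add,
    ENNReal.log_pos_real' (ENNReal.toReal_pos hI1pos.ne' hI1top),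
    ENNReal.log_pos_real' (ENNReal.toReal_pos hI2pos.ne' hI2top),
    ereal_mul_add_real]

lemma stmt5_lt (hP1 : ∑ p, P1 p = 1) (hP2 : ∑ p, P2 p = 1) {α : ℝ} (hα : α < 1) (hα0 : 0 ≤ α) :
    Jalpha α (fun q : (X1 × X2) × (Y1 × Y2) => P1 (q.1.1, q.2.1) * P2 (q.1.2, q.2.2)) =
      Jalpha α P1 + Jalpha α P2 := by
  have he : 0 ≤ 1 - α := by linarith
  haveI h12 : Nonempty (X1 × Y1) := pmf_nonempty P1 hP1
  haveI h34 : Nonempty (X2 × Y2) := pmf_nonempty P2 hP2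
  haveI : Nonempty X1 := ⟨(Classical.arbitrary (X1 × Y1)).1⟩
  haveI : Nonempty Y1 := ⟨(Classical.arbitrary (X1 × Y1)).2⟩
  haveI : Nonempty X2 := ⟨(Classical.arbitrary (X2 × Y2)).1⟩
  haveI : Nonempty Y2 := ⟨(Classical.arbitrary (X2 × Y2)).2⟩
  set I1 := ⨆ Q : PMFon X1 × PMFon Y1, Sfun α P1 Q.1.1 Q.2.1 with hI1
  set I2 := ⨆ Q : PMFon X2 × PMFon Y2, Sfun α P2 Q.1.1 Q.2.1 with hI2
  have hI1top : I1 ≠ ⊤ := by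
    refine ne_top_of_le_ne_top (ENNReal.natCast_ne_top (Fintype.card (X1 × Y1))) ?_
    exact iSup_le fun Q => Sfun_le_card P1 hα0 he hP1 _ _ Q.1.2 Q.2.2
  have hI2top : I2 ≠ ⊤ := by
    refine ne_top_of_le_ne_top (ENNReal.natCast_ne_top (Fintype.card (X2 × Y2))) ?_
    exact iSup_le fun Q => Sfun_le_card P2 hα0 he hP2 _ _ Q.1.2 Q.2.2
  have hI1pos : 0 < I1 := by
    refine lt_of_lt_of_le (Sfun_unif_pos (α := α) P1 hP1) ?_
    exact le_iSup (fun Q : PMFon X1 × PMFon Y1 => Sfun α P1 Q.1.1 Q.2.1)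
      ⟨⟨unif X1, unif_sum⟩, ⟨unif Y1, unif_sum⟩⟩
  have hI2pos : 0 < I2 := by
    refine lt_of_lt_of_le (Sfun_unif_pos (α := α) P2 hP2) ?_
    exact le_iSup (fun Q : PMFon X2 × PMFon Y2 => Sfun α P2 Q.1.1 Q.2.1)
      ⟨⟨unif X2, unif_sum⟩, ⟨unif Y2, unif_sum⟩⟩
  rw [Jalpha_lt hα, Jalpha_lt hα, Jalpha_lt hα, iSup_S_prod α P1 P2 hP1 hP2 hα hα0,
    ENNReal.log_mul_add,
    ENNReal.log_pos_real' (ENNReal.toReal_pos hI1pos.ne' hI1top),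
    ENNReal.log_pos_real' (ENNReal.toReal_pos hI2pos.ne' hI2top),
    ereal_mul_add_real]

end Assemble

section KL

lemma log_term_split {a1 a2 b1 b2 : ℝ} (ha1 : 0 < a1) (ha2 : 0 < a2)
    (hb1 : 0 < b1) (hb2 : 0 < b2) :
    (a1 * a2) * Real.log ((a1 * a2) / (b1 * b2))
      = a2 * (a1 * Real.log (a1 / b1)) + a1 * (a2 * Real.log (a2 / b2)) := by
  rw [← div_mul_div_comm, Real.log_mul (by positivity) (by positivity)]
  ring

lemma sum_split_real {X1 Y1 X2 Y2 : Type*} [Fintype X1] [Fintype X2] [Fintype Y1] [Fintype Y2]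
    (f : (X1 × X2) × (Y1 × Y2) → ℝ) (g1 : X1 × Y1 → ℝ) (g2 : X1 × Y1 → X2 × Y2 → ℝ)
    (w1 : X1 × Y1 → ℝ) (w2 : X2 × Y2 → ℝ) (hw2 : ∑ p, w2 p = 1)
    (h : ∀ (p1 : X1 × Y1) (p2 : X2 × Y2),
      f ((p1.1, p2.1), (p1.2, p2.2)) = w2 p2 * g1 p1 + w1 p1 * g2 p1 p2) :
    ∑ q, f q = (∑ p1, g1 p1) + ∑ p1, w1 p1 * ∑ p2, g2 p1 p2 := by
  rw [sum_reindex4 f]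
  rw [Fintype.sum_prod_type (fun p : (X1×Y1)×(X2×Y2) => f ((p.1.1, p.2.1), (p.1.2, p.2.2)))]
  have : ∀ p1 : X1 × Y1, ∑ p2 : X2 × Y2, f ((p1.1, p2.1), (p1.2, p2.2))
      = g1 p1 + w1 p1 * ∑ p2, g2 p1 p2 := by
    intro p1
    rw [Finset.sum_congr rfl (fun p2 _ => h p1 p2), Finset.sum_add_distrib,
      ← Finset.sum_mul, hw2, one_mul, Finset.mul_sum]
  rw [Finset.sum_congr rfl (fun p1 _ => this p1), Finset.sum_add_distrib]

lemma klDiv_ne_bot {X : Type*} [Fintype X] (P Q : X → ℝ≥0∞) : klDiv P Q ≠ ⊥ := by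
  rw [klDiv]
  split_ifs <;> simp

lemma kl_term_ge {a b : ℝ} (ha : 0 < a) (ha1 : a ≤ 1) (hb : 0 < b) (hb1 : b ≤ 1) :
    -1 ≤ a * Real.log (a / b) := by
  rw [Real.log_div ha.ne' hb.ne']
  have h1 : Real.log a⁻¹ ≤ a⁻¹ - 1 := Real.log_le_sub_one_of_pos (by positivity)
  rw [Real.log_inv] at h1
  have h2 : Real.log b ≤ 0 := Real.log_nonpos hb.le hb1
  have h3 : a * a⁻¹ = 1 := mul_inv_cancel₀ ha.ne'
  nlinarith [mul_nonneg ha.le (neg_nonneg.mpr h2), mul_le_mul_of_nonneg_left h1 ha.le]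

lemma klDiv_ge_neg_card {X Y : Type*} [Fintype X] [Fintype Y]
    (P : X × Y → ℝ≥0∞) (hP : ∑ p, P p = 1)
    (q1 : X → ℝ≥0∞) (q2 : Y → ℝ≥0∞) (h1 : ∑ x, q1 x = 1) (h2 : ∑ y, q2 y = 1) :
    ((-(Fintype.card (X × Y) : ℝ) : ℝ) : EReal) ≤ klDiv P (fun p => q1 p.1 * q2 p.2) := by
  rw [klDiv]
  split_ifs with h
  · apply EReal.coe_le_coe_iff.mpr
    calc (-(Fintype.card (X × Y) : ℝ)) = ∑ _p : X × Y, (-1 : ℝ) := by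
          simp [Finset.card_univ]
      _ ≤ _ := by
          refine Finset.sum_le_sum fun p _ => ?_
          by_cases hp : P p = 0
          · simp [hp]
          · have hq : q1 p.1 * q2 p.2 ≠ 0 := fun hq => hp (h p hq)
            have hqt : q1 p.1 * q2 p.2 ≠ ⊤ :=
              ENNReal.mul_ne_top (pmf_ne_top q1 h1 p.1) (pmf_ne_top q2 h2 p.2)
            have ha : 0 < (P p).toReal := ENNReal.toReal_pos hp (pmf_ne_top P hP p)
            have ha1 : (P p).toReal ≤ 1 := by
              rw [show (1:ℝ) = (1:ℝ≥0∞).toReal by simp]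
              exact ENNReal.toReal_mono ENNReal.one_ne_top (pmf_le_one P hP p)
            have hb : 0 < (q1 p.1 * q2 p.2).toReal := ENNReal.toReal_pos hq hqt
            have hb1 : (q1 p.1 * q2 p.2).toReal ≤ 1 := by
              rw [show (1:ℝ) = (1:ℝ≥0∞).toReal by simp]
              exact ENNReal.toReal_mono ENNReal.one_ne_top
                (mul_le_one' (pmf_le_one q1 h1 p.1) (pmf_le_one q2 h2 p.2))
            exact kl_term_ge ha ha1 hb hb1
  · exact le_top

lemma Jalpha_one {X Y : Type*} [Fintype X] [Fintype Y] (P : X × Y → ℝ≥0∞) :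
    Jalpha 1 P = ⨅ Q : PMFon X × PMFon Y, klDiv P (fun p => Q.1.1 p.1 * Q.2.1 p.2) := by
  unfold Jalpha renyiDiv
  simp

lemma Jalpha_one_real {X Y : Type*} [Fintype X] [Fintype Y] [Nonempty X] [Nonempty Y]
    (P : X × Y → ℝ≥0∞) (hP : ∑ p, P p = 1) :
    ∃ r : ℝ, Jalpha 1 P = (r : EReal) := by
  have hbot : Jalpha 1 P ≠ ⊥ := by
    rw [Jalpha_one]
    intro hb
    have : ((-(Fintype.card (X × Y) : ℝ) : ℝ) : EReal) ≤ ⊥ := by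
      rw [← hb]
      exact le_iInf fun Q => klDiv_ge_neg_card P hP Q.1.1 Q.2.1 Q.1.2 Q.2.2
    exact (EReal.coe_ne_bot _) (le_bot_iff.mp this)
  have htop : Jalpha 1 P ≠ ⊤ := by
    rw [Jalpha_one]
    have hle := iInf_le (fun Q : PMFon X × PMFon Y => klDiv P (fun p => Q.1.1 p.1 * Q.2.1 p.2))
      ⟨⟨unif X, unif_sum⟩, ⟨unif Y, unif_sum⟩⟩
    refine ne_top_of_le_ne_top ?_ hle
    rw [klDiv, if_pos]
    · exact EReal.coe_ne_top _
    · intro x hx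
      exact absurd hx (mul_ne_zero (unif_ne_zero x.1) (unif_ne_zero x.2))
  lift Jalpha 1 P to ℝ using ⟨htop, hbot⟩ with r
  exact ⟨r, rfl⟩

lemma ereal_le_of_forall_add {a : EReal} {b : ℝ} (h : ∀ ε : ℝ, 0 < ε → a ≤ ((b + ε : ℝ) : EReal)) :
    a ≤ (b : EReal) := by
  induction a with
  | bot => exact bot_le
  | coe x =>
    refine EReal.coe_le_coe_iff.mpr ?_
    by_contra hc
    push_neg at hc
    have := EReal.coe_le_coe_iff.mp (h ((x - b) / 2) (by linarith))
    linarith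
  | top =>
    exact absurd (top_le_iff.mp (h 1 one_pos)) (EReal.coe_ne_top _)

end KL

section KLCore
variable {X1 X2 Y1 Y2 : Type*} [Fintype X1] [Fintype X2] [Fintype Y1] [Fintype Y2]
variable (P1 : X1 × Y1 → ℝ≥0∞) (P2 : X2 × Y2 → ℝ≥0∞)

lemma pmf_toReal_sum {A : Type*} [Fintype A] (P : A → ℝ≥0∞) (hP : ∑ p, P p = 1) :
    ∑ p, (P p).toReal = 1 := by
  rw [← ENNReal.toReal_sum (fun p _ => pmf_ne_top P hP p), hP, ENNReal.toReal_one]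

lemma toReal_le_one {x : ℝ≥0∞} (h : x ≤ 1) : x.toReal ≤ 1 := by
  rw [show (1:ℝ) = (1:ℝ≥0∞).toReal by simp]
  exact ENNReal.toReal_mono ENNReal.one_ne_top h

lemma kl_prod_le (hP1 : ∑ p, P1 p = 1) (hP2 : ∑ p, P2 p = 1)
    (c1 : X1 → ℝ≥0∞) (c1' : X2 → ℝ≥0∞) (c2 : Y1 → ℝ≥0∞) (c2' : Y2 → ℝ≥0∞)
    (h1 : ∑ x, c1 x = 1) (h1' : ∑ x, c1' x = 1) (h2 : ∑ y, c2 y = 1) (h2' : ∑ y, c2' y = 1) :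
    klDiv (fun q : (X1 × X2) × (Y1 × Y2) => P1 (q.1.1, q.2.1) * P2 (q.1.2, q.2.2))
        (fun q => (c1 q.1.1 * c1' q.1.2) * (c2 q.2.1 * c2' q.2.2))
      ≤ klDiv P1 (fun p => c1 p.1 * c2 p.2) + klDiv P2 (fun p => c1' p.1 * c2' p.2) := by
  by_cases hA1 : ∀ p : X1 × Y1, c1 p.1 * c2 p.2 = 0 → P1 p = 0
  swap
  · have hT : klDiv P1 (fun p => c1 p.1 * c2 p.2) = ⊤ := by rw [klDiv, if_neg hA1]
    rw [hT, EReal.top_add_of_ne_bot (klDiv_ne_bot _ _)]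
    exact le_top
  by_cases hA2 : ∀ p : X2 × Y2, c1' p.1 * c2' p.2 = 0 → P2 p = 0
  swap
  · have hT : klDiv P2 (fun p => c1' p.1 * c2' p.2) = ⊤ := by rw [klDiv, if_neg hA2]
    rw [hT, EReal.add_top_of_ne_bot (klDiv_ne_bot _ _)]
    exact le_top
  have hA : ∀ q : (X1 × X2) × (Y1 × Y2), (c1 q.1.1 * c1' q.1.2) * (c2 q.2.1 * c2' q.2.2) = 0 →
      P1 (q.1.1, q.2.1) * P2 (q.1.2, q.2.2) = 0 := by
    intro q hq
    rcases mul_eq_zero.mp hq with h | h <;> rcases mul_eq_zero.mp h with h' | h'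
    · exact mul_eq_zero_of_left (hA1 _ (mul_eq_zero_of_left h' _)) _
    · exact mul_eq_zero_of_right _ (hA2 _ (mul_eq_zero_of_left h' _))
    · exact mul_eq_zero_of_left (hA1 _ (mul_eq_zero_of_right _ h')) _
    · exact mul_eq_zero_of_right _ (hA2 _ (mul_eq_zero_of_right _ h'))
  rw [klDiv, klDiv, klDiv, if_pos hA, if_pos hA1, if_pos hA2, ← EReal.coe_add]
  apply EReal.coe_le_coe_iff.mpr
  apply le_of_eq
  have hterm : ∀ (p1 : X1 × Y1) (p2 : X2 × Y2),
      (P1 (p1.1, p1.2) * P2 (p2.1, p2.2)).toReal *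
        Real.log ((P1 (p1.1, p1.2) * P2 (p2.1, p2.2)).toReal /
          ((c1 p1.1 * c1' p2.1) * (c2 p1.2 * c2' p2.2)).toReal)
      = (P2 p2).toReal *
          ((P1 p1).toReal * Real.log ((P1 p1).toReal / (c1 p1.1 * c2 p1.2).toReal))
        + (P1 p1).toReal *
          ((P2 p2).toReal * Real.log ((P2 p2).toReal / (c1' p2.1 * c2' p2.2).toReal)) := by
    intro p1 p2
    by_cases hz1 : P1 p1 = 0
    · simp [Prod.mk.eta, hz1]
    by_cases hz2 : P2 p2 = 0
    · simp [Prod.mk.eta, hz2]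
    have e1 : (p1.1, p1.2) = p1 := rfl
    have e2 : (p2.1, p2.2) = p2 := rfl
    rw [e1, e2]
    have hc1 : c1 p1.1 * c2 p1.2 ≠ 0 := fun hc => hz1 (hA1 p1 hc)
    have hc2 : c1' p2.1 * c2' p2.2 ≠ 0 := fun hc => hz2 (hA2 p2 hc)
    have hb1 : 0 < (c1 p1.1 * c2 p1.2).toReal :=
      ENNReal.toReal_pos hc1 (ENNReal.mul_ne_top (pmf_ne_top c1 h1 _) (pmf_ne_top c2 h2 _))
    have hb2 : 0 < (c1' p2.1 * c2' p2.2).toReal :=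
      ENNReal.toReal_pos hc2 (ENNReal.mul_ne_top (pmf_ne_top c1' h1' _) (pmf_ne_top c2' h2' _))
    have ha1 : 0 < (P1 p1).toReal := ENNReal.toReal_pos hz1 (pmf_ne_top P1 hP1 p1)
    have ha2 : 0 < (P2 p2).toReal := ENNReal.toReal_pos hz2 (pmf_ne_top P2 hP2 p2)
    rw [show (c1 p1.1 * c1' p2.1) * (c2 p1.2 * c2' p2.2)
        = (c1 p1.1 * c2 p1.2) * (c1' p2.1 * c2' p2.2) by ring]
    rw [ENNReal.toReal_mul, ENNReal.toReal_mul (a := c1 p1.1 * c2 p1.2)]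
    exact log_term_split ha1 ha2 hb1 hb2
  rw [sum_split_real
      (fun q : (X1 × X2) × (Y1 × Y2) =>
        (P1 (q.1.1, q.2.1) * P2 (q.1.2, q.2.2)).toReal *
          Real.log ((P1 (q.1.1, q.2.1) * P2 (q.1.2, q.2.2)).toReal /
            ((c1 q.1.1 * c1' q.1.2) * (c2 q.2.1 * c2' q.2.2)).toReal))
      (fun p1 => (P1 p1).toReal * Real.log ((P1 p1).toReal / (c1 p1.1 * c2 p1.2).toReal))
      (fun _p1 p2 => (P2 p2).toReal * Real.log ((P2 p2).toReal / (c1' p2.1 * c2' p2.2).toReal))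
      (fun p1 => (P1 p1).toReal) (fun p2 => (P2 p2).toReal)
      (pmf_toReal_sum P2 hP2) hterm]
  rw [← Finset.sum_mul, pmf_toReal_sum P1 hP1, one_mul]

lemma kl_core_ge [Nonempty X2] [Nonempty Y2] (hP1 : ∑ p, P1 p = 1) (hP2 : ∑ p, P2 p = 1)
    (QX : X1 × X2 → ℝ≥0∞) (QY : Y1 × Y2 → ℝ≥0∞)
    (hQX : ∑ p, QX p = 1) (hQY : ∑ p, QY p = 1) (L1 L2 : ℝ)
    (hL1 : ∀ (c1 : X1 → ℝ≥0∞) (c2 : Y1 → ℝ≥0∞), ∑ x, c1 x = 1 → ∑ y, c2 y = 1 →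
      (L1 : EReal) ≤ klDiv P1 (fun p => c1 p.1 * c2 p.2))
    (hL2 : ∀ (c1 : X2 → ℝ≥0∞) (c2 : Y2 → ℝ≥0∞), ∑ x, c1 x = 1 → ∑ y, c2 y = 1 →
      (L2 : EReal) ≤ klDiv P2 (fun p => c1 p.1 * c2 p.2)) :
    ((L1 + L2 : ℝ) : EReal) ≤
      klDiv (fun q : (X1 × X2) × (Y1 × Y2) => P1 (q.1.1, q.2.1) * P2 (q.1.2, q.2.2))
        (fun q => QX q.1 * QY q.2) := by
  rw [klDiv]
  split_ifs with hAC
  swap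
  · exact le_top
  obtain ⟨p2pos, hp2pos⟩ := pmf_exists_pos P2 hP2
  have hAC1 : ∀ p : X1 × Y1, mrg QX p.1 * mrg QY p.2 = 0 → P1 p = 0 := by
    intro p hp
    rcases mul_eq_zero.mp hp with h | h
    · have hq : QX (p.1, p2pos.1) = 0 :=
        (Finset.sum_eq_zero_iff.mp h) p2pos.1 (mem_univ _)
      have h3 := hAC ((p.1, p2pos.1), (p.2, p2pos.2)) (by rw [hq, zero_mul])
      rcases mul_eq_zero.mp h3 with h' | h'
      · exact h'
      · exact absurd h' hp2pos
    · have hq : QY (p.2, p2pos.2) = 0 :=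
        (Finset.sum_eq_zero_iff.mp h) p2pos.2 (mem_univ _)
      have h3 := hAC ((p.1, p2pos.1), (p.2, p2pos.2)) (by rw [hq, mul_zero])
      rcases mul_eq_zero.mp h3 with h' | h'
      · exact h'
      · exact absurd h' hp2pos
  have hmrg_ne : ∀ p1 : X1 × Y1, P1 p1 ≠ 0 → mrg QX p1.1 ≠ 0 ∧ mrg QY p1.2 ≠ 0 := by
    intro p1 h
    constructor
    · intro hm; exact h (hAC1 p1 (by rw [hm, zero_mul]))
    · intro hm; exact h (hAC1 p1 (by rw [hm, mul_zero]))
  have hAC2 : ∀ p1 : X1 × Y1, P1 p1 ≠ 0 →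
      ∀ r : X2 × Y2, cnd QX p1.1 r.1 * cnd QY p1.2 r.2 = 0 → P2 r = 0 := by
    intro p1 hne r hr
    obtain ⟨hmX, hmY⟩ := hmrg_ne p1 hne
    rcases mul_eq_zero.mp hr with h | h
    · rw [cnd, if_neg hmX] at h
      have hQ0 : QX (p1.1, r.1) = 0 := by
        rcases ENNReal.div_eq_zero_iff.mp h with h' | h'
        · exact h'
        · exact absurd h' (mrg_ne_top QX hQX p1.1)
      have h3 := hAC ((p1.1, r.1), (p1.2, r.2)) (by rw [hQ0, zero_mul])
      rcases mul_eq_zero.mp h3 with h' | h'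
      · exact absurd h' hne
      · exact h'
    · rw [cnd, if_neg hmY] at h
      have hQ0 : QY (p1.2, r.2) = 0 := by
        rcases ENNReal.div_eq_zero_iff.mp h with h' | h'
        · exact h'
        · exact absurd h' (mrg_ne_top QY hQY p1.2)
      have h3 := hAC ((p1.1, r.1), (p1.2, r.2)) (by rw [hQ0, mul_zero])
      rcases mul_eq_zero.mp h3 with h' | h'
      · exact absurd h' hne
      · exact h'
  -- termwise split
  have hterm : ∀ (p1 : X1 × Y1) (p2 : X2 × Y2),
      (P1 (p1.1, p1.2) * P2 (p2.1, p2.2)).toReal *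
        Real.log ((P1 (p1.1, p1.2) * P2 (p2.1, p2.2)).toReal /
          (QX (p1.1, p2.1) * QY (p1.2, p2.2)).toReal)
      = (P2 p2).toReal *
          ((P1 p1).toReal * Real.log ((P1 p1).toReal / (mrg QX p1.1 * mrg QY p1.2).toReal))
        + (P1 p1).toReal *
          ((P2 p2).toReal * Real.log ((P2 p2).toReal /
            (cnd QX p1.1 p2.1 * cnd QY p1.2 p2.2).toReal)) := by
    intro p1 p2
    by_cases hz1 : P1 p1 = 0
    · simp [Prod.mk.eta, hz1]
    by_cases hz2 : P2 p2 = 0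
    · simp [Prod.mk.eta, hz2]
    have e1 : (p1.1, p1.2) = p1 := rfl
    have e2 : (p2.1, p2.2) = p2 := rfl
    rw [e1, e2]
    obtain ⟨hmX, hmY⟩ := hmrg_ne p1 hz1
    have hPbig : P1 p1 * P2 p2 ≠ 0 := mul_ne_zero hz1 hz2
    have hQprod : QX (p1.1, p2.1) * QY (p1.2, p2.2) ≠ 0 := by
      intro hq
      exact hPbig (hAC ((p1.1, p2.1), (p1.2, p2.2)) hq)
    have hQXne : QX (p1.1, p2.1) ≠ 0 := fun h => hQprod (by rw [h, zero_mul])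
    have hQYne : QY (p1.2, p2.2) ≠ 0 := fun h => hQprod (by rw [h, mul_zero])
    have hcX : cnd QX p1.1 p2.1 ≠ 0 := by
      rw [cnd, if_neg hmX]
      rw [ne_eq, ENNReal.div_eq_zero_iff]
      push_neg
      exact ⟨hQXne, mrg_ne_top QX hQX p1.1⟩
    have hcY : cnd QY p1.2 p2.2 ≠ 0 := by
      rw [cnd, if_neg hmY]
      rw [ne_eq, ENNReal.div_eq_zero_iff]
      push_neg
      exact ⟨hQYne, mrg_ne_top QY hQY p1.2⟩
    have ha1 : 0 < (P1 p1).toReal := ENNReal.toReal_pos hz1 (pmf_ne_top P1 hP1 p1)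
    have ha2 : 0 < (P2 p2).toReal := ENNReal.toReal_pos hz2 (pmf_ne_top P2 hP2 p2)
    have hb1 : 0 < (mrg QX p1.1 * mrg QY p1.2).toReal := by
      refine ENNReal.toReal_pos (mul_ne_zero hmX hmY)
        (ENNReal.mul_ne_top (mrg_ne_top QX hQX _) (mrg_ne_top QY hQY _))
    have hb2 : 0 < (cnd QX p1.1 p2.1 * cnd QY p1.2 p2.2).toReal := by
      refine ENNReal.toReal_pos (mul_ne_zero hcX hcY)
        (ENNReal.mul_ne_top (cnd_ne_top QX hQX _ _) (cnd_ne_top QY hQY _ _))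
    rw [show QX (p1.1, p2.1) * QY (p1.2, p2.2)
        = (mrg QX p1.1 * mrg QY p1.2) * (cnd QX p1.1 p2.1 * cnd QY p1.2 p2.2) by
      rw [← cnd_mul QX hQX hmX p2.1, ← cnd_mul QY hQY hmY p2.2]; ring]
    rw [ENNReal.toReal_mul, ENNReal.toReal_mul (a := mrg QX p1.1 * mrg QY p1.2)]
    exact log_term_split ha1 ha2 hb1 hb2
  apply EReal.coe_le_coe_iff.mpr
  rw [sum_split_real
      (fun q : (X1 × X2) × (Y1 × Y2) =>
        (P1 (q.1.1, q.2.1) * P2 (q.1.2, q.2.2)).toReal *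
          Real.log ((P1 (q.1.1, q.2.1) * P2 (q.1.2, q.2.2)).toReal /
            (QX q.1 * QY q.2).toReal))
      (fun p1 => (P1 p1).toReal * Real.log ((P1 p1).toReal / (mrg QX p1.1 * mrg QY p1.2).toReal))
      (fun p1 p2 => (P2 p2).toReal * Real.log ((P2 p2).toReal /
        (cnd QX p1.1 p2.1 * cnd QY p1.2 p2.2).toReal))
      (fun p1 => (P1 p1).toReal) (fun p2 => (P2 p2).toReal)
      (pmf_toReal_sum P2 hP2) hterm]
  have hS1 : L1 ≤ ∑ p1, (P1 p1).toReal *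
      Real.log ((P1 p1).toReal / (mrg QX p1.1 * mrg QY p1.2).toReal) := by
    have h := hL1 (mrg QX) (mrg QY) (mrg_sum QX hQX) (mrg_sum QY hQY)
    rw [klDiv, if_pos hAC1] at h
    exact EReal.coe_le_coe_iff.mp h
  have hS2 : ∑ p1, (P1 p1).toReal * L2 ≤ ∑ p1 : X1 × Y1, (P1 p1).toReal *
      ∑ p2, (P2 p2).toReal * Real.log ((P2 p2).toReal /
        (cnd QX p1.1 p2.1 * cnd QY p1.2 p2.2).toReal) := by
    refine Finset.sum_le_sum fun p1 _ => ?_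
    by_cases hz1 : P1 p1 = 0
    · simp [hz1]
    refine mul_le_mul_of_nonneg_left ?_ ENNReal.toReal_nonneg
    have h := hL2 (cnd QX p1.1) (cnd QY p1.2) (cnd_sum QX hQX p1.1) (cnd_sum QY hQY p1.2)
    rw [klDiv, if_pos (hAC2 p1 hz1)] at h
    exact EReal.coe_le_coe_iff.mp h
  have hw : ∑ p1, (P1 p1).toReal * L2 = L2 := by
    rw [← Finset.sum_mul, pmf_toReal_sum P1 hP1, one_mul]
  rw [hw] at hS2
  linarith

end KLCore

section Final
variable {X1 X2 Y1 Y2 : Type*} [Fintype X1] [Fintype X2] [Fintype Y1] [Fintype Y2]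
variable (P1 : X1 × Y1 → ℝ≥0∞) (P2 : X2 × Y2 → ℝ≥0∞)

lemma stmt5_one (hP1 : ∑ p, P1 p = 1) (hP2 : ∑ p, P2 p = 1) :
    Jalpha 1 (fun q : (X1 × X2) × (Y1 × Y2) => P1 (q.1.1, q.2.1) * P2 (q.1.2, q.2.2)) =
      Jalpha 1 P1 + Jalpha 1 P2 := by
  haveI h12 : Nonempty (X1 × Y1) := pmf_nonempty P1 hP1
  haveI h34 : Nonempty (X2 × Y2) := pmf_nonempty P2 hP2
  haveI : Nonempty X1 := ⟨(Classical.arbitrary (X1 × Y1)).1⟩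
  haveI : Nonempty Y1 := ⟨(Classical.arbitrary (X1 × Y1)).2⟩
  haveI : Nonempty X2 := ⟨(Classical.arbitrary (X2 × Y2)).1⟩
  haveI : Nonempty Y2 := ⟨(Classical.arbitrary (X2 × Y2)).2⟩
  obtain ⟨r1, hr1⟩ := Jalpha_one_real P1 hP1
  obtain ⟨r2, hr2⟩ := Jalpha_one_real P2 hP2
  rw [hr1, hr2, ← EReal.coe_add]
  apply le_antisymm
  · refine ereal_le_of_forall_add fun ε hε => ?_
    have hhalf : (0:ℝ) < ε / 2 := by linarith
    have hlt1 : Jalpha 1 P1 < ((r1 + ε/2 : ℝ) : EReal) := by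
      rw [hr1]; exact_mod_cast (by linarith : r1 < r1 + ε/2)
    have hlt2 : Jalpha 1 P2 < ((r2 + ε/2 : ℝ) : EReal) := by
      rw [hr2]; exact_mod_cast (by linarith : r2 < r2 + ε/2)
    rw [Jalpha_one] at hlt1 hlt2
    obtain ⟨Q1, hQ1⟩ := iInf_lt_iff.mp hlt1
    obtain ⟨Q2, hQ2⟩ := iInf_lt_iff.mp hlt2
    have hle : Jalpha 1 (fun q : (X1 × X2) × (Y1 × Y2) => P1 (q.1.1, q.2.1) * P2 (q.1.2, q.2.2))
        ≤ klDiv (fun q : (X1 × X2) × (Y1 × Y2) => P1 (q.1.1, q.2.1) * P2 (q.1.2, q.2.2))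
          (fun q => (Q1.1.1 q.1.1 * Q2.1.1 q.1.2) * (Q1.2.1 q.2.1 * Q2.2.1 q.2.2)) := by
      rw [Jalpha_one]
      exact iInf_le _ (⟨prodPMF Q1.1 Q2.1, prodPMF Q1.2 Q2.2⟩ :
        PMFon (X1 × X2) × PMFon (Y1 × Y2))
    refine hle.trans ?_
    refine (kl_prod_le P1 P2 hP1 hP2 Q1.1.1 Q2.1.1 Q1.2.1 Q2.2.1
      Q1.1.2 Q2.1.2 Q1.2.2 Q2.2.2).trans ?_
    calc klDiv P1 (fun p => Q1.1.1 p.1 * Q1.2.1 p.2) + klDiv P2 (fun p => Q2.1.1 p.1 * Q2.2.1 p.2)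
        ≤ ((r1 + ε/2 : ℝ) : EReal) + ((r2 + ε/2 : ℝ) : EReal) := add_le_add hQ1.le hQ2.le
      _ = ((r1 + r2 + ε : ℝ) : EReal) := by norm_cast; ring
  · rw [Jalpha_one]
    refine le_iInf fun Q => ?_
    refine kl_core_ge P1 P2 hP1 hP2 Q.1.1 Q.2.1 Q.1.2 Q.2.2 r1 r2 ?_ ?_
    · intro c1 c2 h1 h2
      have : Jalpha 1 P1 ≤ klDiv P1 (fun p => c1 p.1 * c2 p.2) := by
        rw [Jalpha_one]
        exact iInf_le _ (⟨⟨c1, h1⟩, ⟨c2, h2⟩⟩ : PMFon X1 × PMFon Y1)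
      rwa [hr1] at this
    · intro c1 c2 h1 h2
      have : Jalpha 1 P2 ≤ klDiv P2 (fun p => c1 p.1 * c2 p.2) := by
        rw [Jalpha_one]
        exact iInf_le _ (⟨⟨c1, h1⟩, ⟨c2, h2⟩⟩ : PMFon X2 × PMFon Y2)
      rwa [hr2] at this

end Final

theorem stmt5' {X1 X2 Y1 Y2 : Type*} [Fintype X1] [Fintype X2] [Fintype Y1] [Fintype Y2]
    (P1 : X1 × Y1 → ℝ≥0∞) (hP1 : ∑ p, P1 p = 1)
    (P2 : X2 × Y2 → ℝ≥0∞) (hP2 : ∑ p, P2 p = 1) (α : ℝ) (hα : 0 < α) :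
    Jalpha α (fun q : (X1 × X2) × (Y1 × Y2) => P1 (q.1.1, q.2.1) * P2 (q.1.2, q.2.2)) =
      Jalpha α P1 + Jalpha α P2 := by
  rcases lt_trichotomy α 1 with h | h | h
  · exact stmt5_lt P1 P2 hP1 hP2 h hα.le
  · subst h; exact stmt5_one P1 P2 hP1 hP2
  · exact stmt5_gt P1 P2 hP1 hP2 h

/-- additivity of `J_α` for independent pairs. -/
theorem stmt5 {X1 X2 Y1 Y2 : Type*} [Fintype X1] [Fintype X2] [Fintype Y1] [Fintype Y2]
    (P1 : X1 × Y1 → ℝ≥0∞) (hP1 : ∑ p, P1 p = 1)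
    (P2 : X2 × Y2 → ℝ≥0∞) (hP2 : ∑ p, P2 p = 1) (α : ℝ) (hα : 0 < α) :
    Jalpha α (fun q : (X1 × X2) × (Y1 × Y2) => P1 (q.1.1, q.2.1) * P2 (q.1.2, q.2.2)) =
      Jalpha α P1 + Jalpha α P2 :=
  stmt5' P1 hP1 P2 hP2 α hα
end

section
/- For all α > 0, J_α(X;Y) ≤ log |X| and J_α(X;Y) ≤ log |Y|, where |X| and |Y| are the cardinalities of the alphabets of X and Y. -/
open scoped ENNReal BigOperators
open Finset

section AuxLemmas

variable {X Y : Type*} [Fintype X] [Fintype Y]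

private lemma aux_sum_rpow_le {ι : Type*} [Fintype ι] (f : ι → ℝ≥0∞) {α : ℝ} (hα : 1 ≤ α) :
    ∑ i, f i ^ α ≤ (∑ i, f i) ^ α := by
  have h1 : (0:ℝ) ≤ α - 1 := by linarith
  calc ∑ i, f i ^ α = ∑ i, f i ^ (1:ℝ) * f i ^ (α - 1) := by
        refine Finset.sum_congr rfl fun i _ => ?_
        rw [← ENNReal.rpow_add_of_nonneg 1 (α - 1) zero_le_one h1]
        norm_num
    _ ≤ ∑ i, f i ^ (1:ℝ) * (∑ j, f j) ^ (α - 1) := by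
        refine Finset.sum_le_sum fun i _ => ?_
        exact mul_le_mul_right (ENNReal.rpow_le_rpow
          (Finset.single_le_sum (fun j _ => zero_le) (Finset.mem_univ i)) h1) _
    _ = (∑ i, f i) * (∑ i, f i) ^ (α - 1) := by
        simp [ENNReal.rpow_one, ← Finset.sum_mul]
    _ = (∑ i, f i) ^ α := by
        rw [show α = 1 + (α - 1) by ring,
          ENNReal.rpow_add_of_nonneg 1 (α - 1) zero_le_one h1, ENNReal.rpow_one]
        norm_num

private lemma aux_rpow_sum_le {ι : Type*} [Fintype ι] (f : ι → ℝ≥0∞) {α : ℝ}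
    (hα0 : 0 < α) (hα1 : α ≤ 1) (htop : ∑ i, f i ≠ ⊤) :
    (∑ i, f i) ^ α ≤ ∑ i, f i ^ α := by
  by_cases h0 : ∑ i, f i = 0
  · rw [h0, ENNReal.zero_rpow_of_pos hα0]; exact zero_le
  have h1 : (0:ℝ) ≤ 1 - α := by linarith
  have hne : (∑ i, f i) ^ (1 - α) ≠ 0 := by
    intro h
    rcases ENNReal.rpow_eq_zero_iff.1 h with ⟨h, _⟩ | ⟨_, h⟩
    · exact h0 h
    · linarith
  have hnetop : (∑ i, f i) ^ (1 - α) ≠ ⊤ := ENNReal.rpow_ne_top_of_nonneg h1 htop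
  have hstep : ∑ i, f i ≤ (∑ i, f i ^ α) * (∑ i, f i) ^ (1 - α) := by
    calc ∑ i, f i = ∑ i, f i ^ α * f i ^ (1 - α) := by
          refine Finset.sum_congr rfl fun i _ => ?_
          rw [← ENNReal.rpow_add_of_nonneg α (1 - α) hα0.le h1]
          norm_num
      _ ≤ ∑ i, f i ^ α * (∑ j, f j) ^ (1 - α) := by
          refine Finset.sum_le_sum fun i _ => ?_
          exact mul_le_mul_right (ENNReal.rpow_le_rpow
            (Finset.single_le_sum (fun j _ => zero_le) (Finset.mem_univ i)) h1) _
      _ = (∑ i, f i ^ α) * (∑ i, f i) ^ (1 - α) := by rw [← Finset.sum_mul]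
  have h2 := mul_le_mul_left hstep ((∑ i, f i) ^ (1 - α))⁻¹
  rw [mul_assoc, ENNReal.mul_inv_cancel hne hnetop, mul_one] at h2
  calc (∑ i, f i) ^ α = (∑ i, f i) * ((∑ i, f i) ^ (1 - α))⁻¹ := by
        have e1 : (∑ i, f i) ^ α = (∑ i, f i) ^ ((1:ℝ) + (α - 1)) := by norm_num
        rw [e1, ENNReal.rpow_add 1 (α - 1) h0 htop,
          ENNReal.rpow_one, show α - 1 = -(1 - α) by ring, ENNReal.rpow_neg]
    _ ≤ ∑ i, f i ^ α := h2

private lemma sum_swap_pair {M : Type*} [AddCommMonoid M] (g : X × Y → M) :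
    ∑ q : Y × X, g (q.2, q.1) = ∑ p, g p :=
  Fintype.sum_equiv (Equiv.prodComm Y X) _ _ (fun _ => rfl)

private lemma renyiDiv_swap (α : ℝ) (P Q : X × Y → ℝ≥0∞) :
    renyiDiv α (fun q : Y × X => P (q.2, q.1)) (fun q => Q (q.2, q.1)) = renyiDiv α P Q := by
  have hforall : (∀ q : Y × X, Q (q.2, q.1) = 0 → P (q.2, q.1) = 0)
      ↔ (∀ p, Q p = 0 → P p = 0) := ⟨fun h p => h (p.2, p.1), fun h q => h _⟩
  by_cases h1 : α = 1
  · simp only [renyiDiv, klDiv, if_pos h1]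
    by_cases hc : ∀ p, Q p = 0 → P p = 0
    · rw [if_pos (hforall.2 hc), if_pos hc]
      exact congrArg (fun r : ℝ => (r : EReal))
        (sum_swap_pair (fun p => (P p).toReal * Real.log ((P p).toReal / (Q p).toReal)))
    · rw [if_neg (fun h => hc (hforall.1 h)), if_neg hc]
  · simp only [renyiDiv, if_neg h1]
    rw [sum_swap_pair (fun p => P p ^ α * Q p ^ (1 - α))]

private lemma key_bound (P : X × Y → ℝ≥0∞) (hP : ∑ p, P p = 1) (α : ℝ) (hα : 0 < α) :
    renyiDiv α P (fun p => (Fintype.card X : ℝ≥0∞)⁻¹ * margY P p.2)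
      ≤ ((Real.log (Fintype.card X) : ℝ) : EReal) := by
  have hXY : Nonempty (X × Y) := by
    by_contra h
    rw [not_nonempty_iff] at h
    rw [Finset.univ_eq_empty, Finset.sum_empty] at hP
    exact zero_ne_one hP
  have hXne : Nonempty X := ⟨hXY.some.1⟩
  have hcard0 : (Fintype.card X : ℝ≥0∞) ≠ 0 := by
    exact_mod_cast Fintype.card_ne_zero
  have hcardtop : (Fintype.card X : ℝ≥0∞) ≠ ⊤ := ENNReal.natCast_ne_top _
  have hcard1 : (1:ℝ) ≤ (Fintype.card X : ℝ) := by exact_mod_cast Fintype.card_pos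
  have hlogN : ENNReal.log (Fintype.card X : ℝ≥0∞)
      = ((Real.log (Fintype.card X) : ℝ) : EReal) := by
    rw [ENNReal.log_pos_real hcard0 hcardtop, ENNReal.toReal_natCast]
  set N := (Fintype.card X : ℝ≥0∞) with hN
  have hPle : ∀ p, P p ≤ 1 := fun p =>
    hP ▸ Finset.single_le_sum (fun _ _ => zero_le) (Finset.mem_univ p)
  have hPtop : ∀ p, P p ≠ ⊤ := fun p => ne_top_of_le_ne_top ENNReal.one_ne_top (hPle p)
  have hPy : ∀ x y, P (x, y) ≤ margY P y := fun x y => by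
    simp only [margY]
    exact Finset.single_le_sum (f := fun x => P (x, y)) (fun _ _ => zero_le)
      (Finset.mem_univ x)
  have hmsum : ∑ y, margY P y = 1 := by
    rw [← hP, Fintype.sum_prod_type_right]
    simp [margY]
  have hmle : ∀ y, margY P y ≤ 1 := fun y =>
    le_trans (Finset.single_le_sum (f := fun y => margY P y) (fun _ _ => zero_le)
      (Finset.mem_univ y)) (le_of_eq hmsum)
  have hmtop : ∀ y, margY P y ≠ ⊤ := fun y => ne_top_of_le_ne_top ENNReal.one_ne_top (hmle y)
  by_cases h1 : α = 1
  · -- KL case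
    have hac : ∀ p : X × Y, N⁻¹ * margY P p.2 = 0 → P p = 0 := by
      rintro ⟨x, y⟩ h
      rcases mul_eq_zero.1 h with h | h
      · exact absurd h (by simp [ENNReal.inv_eq_zero, hcardtop])
      · exact le_antisymm (h ▸ hPy x y) (zero_le)
    simp only [renyiDiv, klDiv, if_pos h1, if_pos hac]
    rw [EReal.coe_le_coe_iff]
    have hsum1 : ∑ p, (P p).toReal = 1 := by
      rw [← ENNReal.toReal_sum (fun p _ => hPtop p), hP, ENNReal.toReal_one]
    calc ∑ p, (P p).toReal * Real.log ((P p).toReal / ((N⁻¹ * margY P p.2).toReal))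
        ≤ ∑ p, (P p).toReal * Real.log (Fintype.card X) := by
          refine Finset.sum_le_sum fun p _ => ?_
          by_cases hp0 : P p = 0
          · simp [hp0]
          · have ha : 0 < (P p).toReal := ENNReal.toReal_pos hp0 (hPtop p)
            have hm0 : margY P p.2 ≠ 0 := fun h =>
              hp0 (le_antisymm (h ▸ hPy p.1 p.2) (zero_le))
            have hb : 0 < (margY P p.2).toReal := ENNReal.toReal_pos hm0 (hmtop p.2)
            have hab : (P p).toReal ≤ (margY P p.2).toReal :=
              ENNReal.toReal_mono (hmtop p.2) (hPy p.1 p.2)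
            have hcpos : (0:ℝ) < (Fintype.card X : ℝ) := by linarith
            have hrw : (P p).toReal / ((N⁻¹ * margY P p.2).toReal)
                = ((P p).toReal / (margY P p.2).toReal) * (Fintype.card X : ℝ) := by
              rw [ENNReal.toReal_mul, ENNReal.toReal_inv, hN, ENNReal.toReal_natCast]
              field_simp
            rw [hrw, Real.log_mul (by positivity) (by positivity)]
            have hlog1 : Real.log ((P p).toReal / (margY P p.2).toReal) ≤ 0 :=
              Real.log_nonpos (by positivity) ((div_le_one hb).2 hab)
            nlinarith [mul_nonneg ha.le (neg_nonneg.2 hlog1)]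
      _ = Real.log (Fintype.card X) := by rw [← Finset.sum_mul, hsum1, one_mul]
  · -- Rényi case
    have h10 : α - 1 ≠ 0 := fun h => h1 (by linarith [sub_eq_zero.1 h])
    simp only [renyiDiv, if_neg h1]
    have hSfact : ∑ p : X × Y, P p ^ α * ((N⁻¹ * margY P p.2) ^ (1 - α))
        = N ^ (α - 1) * ∑ y, margY P y ^ (1 - α) * ∑ x, P (x, y) ^ α := by
      rw [Fintype.sum_prod_type_right, Finset.mul_sum]
      refine Finset.sum_congr rfl fun y _ => ?_
      rw [Finset.mul_sum, Finset.mul_sum]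
      refine Finset.sum_congr rfl fun x _ => ?_
      rw [ENNReal.mul_rpow_of_ne_top (ENNReal.inv_ne_top.2 hcard0) (hmtop y),
        ENNReal.inv_rpow, ← ENNReal.rpow_neg, show -(1 - α) = α - 1 by ring]
      ring
    rcases h1 |> Ne.lt_or_gt with hlt | hgt
    · -- α < 1
      have hT : (1:ℝ≥0∞) ≤ ∑ y, margY P y ^ (1 - α) * ∑ x, P (x, y) ^ α := by
        rw [← hmsum]
        refine Finset.sum_le_sum fun y _ => ?_
        by_cases hy : margY P y = 0
        · rw [hy]; exact zero_le
        · calc margY P y = margY P y ^ (1 - α) * margY P y ^ α := by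
                rw [← ENNReal.rpow_add (1 - α) α hy (hmtop y)]; norm_num
            _ ≤ margY P y ^ (1 - α) * ∑ x, P (x, y) ^ α :=
                mul_le_mul_right (aux_rpow_sum_le (fun x => P (x, y)) hα hlt.le (hmtop y)) _
      have hS : N ^ (α - 1) ≤ ∑ p : X × Y, P p ^ α * ((N⁻¹ * margY P p.2) ^ (1 - α)) := by
        rw [hSfact]
        calc N ^ (α - 1) = N ^ (α - 1) * 1 := (mul_one _).symm
          _ ≤ _ := mul_le_mul_right hT _
      have hlogS : (((α - 1) * Real.log (Fintype.card X) : ℝ) : EReal)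
          ≤ ENNReal.log (∑ p : X × Y, P p ^ α * ((N⁻¹ * margY P p.2) ^ (1 - α))) := by
        refine le_trans ?_ (ENNReal.log_monotone hS)
        rw [ENNReal.log_rpow, hlogN, ← EReal.coe_mul]
      have hkey : ∀ A B : EReal, B ≤ A →
          (((α - 1)⁻¹ : ℝ) : EReal) * A ≤ (((α - 1)⁻¹ : ℝ) : EReal) * B := by
        intro A B h
        have hcn : (0:ℝ) ≤ -(α - 1)⁻¹ :=
          neg_nonneg.2 (inv_nonpos.2 (by linarith))
        have h2 : ((-(α - 1)⁻¹ : ℝ) : EReal) * B ≤ ((-(α - 1)⁻¹ : ℝ) : EReal) * A :=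
          mul_le_mul_of_nonneg_left h (by exact_mod_cast hcn)
        have h3 := EReal.neg_le_neg_iff.2 h2
        rwa [EReal.coe_neg, EReal.neg_mul, EReal.neg_mul, neg_neg, neg_neg] at h3
      calc (((α - 1)⁻¹ : ℝ) : EReal)
            * ENNReal.log (∑ p : X × Y, P p ^ α * ((N⁻¹ * margY P p.2) ^ (1 - α)))
          ≤ (((α - 1)⁻¹ : ℝ) : EReal) * (((α - 1) * Real.log (Fintype.card X) : ℝ) : EReal) :=
            hkey _ _ hlogS
        _ = ((Real.log (Fintype.card X) : ℝ) : EReal) := by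
            rw [← EReal.coe_mul, ← mul_assoc, inv_mul_cancel₀ h10, one_mul]
    · -- α > 1
      have hT : ∑ y, margY P y ^ (1 - α) * ∑ x, P (x, y) ^ α ≤ 1 := by
        rw [← hmsum]
        refine Finset.sum_le_sum fun y _ => ?_
        by_cases hy : margY P y = 0
        · have hx0 : ∀ x, P (x, y) = 0 := fun x => le_antisymm (hy ▸ hPy x y) (zero_le)
          simp [hx0, ENNReal.zero_rpow_of_pos hα]
        · calc margY P y ^ (1 - α) * ∑ x, P (x, y) ^ α
              ≤ margY P y ^ (1 - α) * margY P y ^ α :=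
                mul_le_mul_right (aux_sum_rpow_le (fun x => P (x, y)) hgt.le) _
            _ = margY P y := by
                rw [← ENNReal.rpow_add (1 - α) α hy (hmtop y)]; norm_num
      have hS : ∑ p : X × Y, P p ^ α * ((N⁻¹ * margY P p.2) ^ (1 - α)) ≤ N ^ (α - 1) := by
        rw [hSfact]
        calc N ^ (α - 1) * (∑ y, margY P y ^ (1 - α) * ∑ x, P (x, y) ^ α)
            ≤ N ^ (α - 1) * 1 := mul_le_mul_right hT _
          _ = N ^ (α - 1) := mul_one _
      have hlogS : ENNReal.log (∑ p : X × Y, P p ^ α * ((N⁻¹ * margY P p.2) ^ (1 - α)))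
          ≤ (((α - 1) * Real.log (Fintype.card X) : ℝ) : EReal) := by
        refine le_trans (ENNReal.log_monotone hS) ?_
        rw [ENNReal.log_rpow, hlogN, ← EReal.coe_mul]
      have hcpos : (0:ℝ) ≤ (α - 1)⁻¹ := inv_nonneg.2 (by linarith)
      calc (((α - 1)⁻¹ : ℝ) : EReal)
            * ENNReal.log (∑ p : X × Y, P p ^ α * ((N⁻¹ * margY P p.2) ^ (1 - α)))
          ≤ (((α - 1)⁻¹ : ℝ) : EReal) * (((α - 1) * Real.log (Fintype.card X) : ℝ) : EReal) :=
            mul_le_mul_of_nonneg_left hlogS (by exact_mod_cast hcpos)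
        _ = ((Real.log (Fintype.card X) : ℝ) : EReal) := by
            rw [← EReal.coe_mul, ← mul_assoc, inv_mul_cancel₀ h10, one_mul]

end AuxLemmas


/-- `J_α(X;Y) ≤ log |X|` and `J_α(X;Y) ≤ log |Y|`. -/
theorem stmt6 {X Y : Type*} [Fintype X] [Fintype Y] (P : X × Y → ℝ≥0∞)
    (hP : ∑ p, P p = 1) (α : ℝ) (hα : 0 < α) :
    Jalpha α P ≤ ((Real.log (Fintype.card X) : ℝ) : EReal) ∧
    Jalpha α P ≤ ((Real.log (Fintype.card Y) : ℝ) : EReal) := by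
  have hXY : Nonempty (X × Y) := by
    by_contra h
    rw [not_nonempty_iff] at h
    rw [Finset.univ_eq_empty, Finset.sum_empty] at hP
    exact zero_ne_one hP
  have hXne : Nonempty X := ⟨hXY.some.1⟩
  have hYne : Nonempty Y := ⟨hXY.some.2⟩
  constructor
  · have hu : ∑ _x : X, (Fintype.card X : ℝ≥0∞)⁻¹ = 1 := by
      rw [Finset.sum_const, Finset.card_univ, nsmul_eq_mul]
      exact ENNReal.mul_inv_cancel (by exact_mod_cast Fintype.card_ne_zero)
        (ENNReal.natCast_ne_top _)
    have hm : ∑ y, margY P y = 1 := by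
      rw [← hP, Fintype.sum_prod_type_right]
      simp [margY]
    unfold Jalpha
    refine le_trans (iInf_le _
      (⟨⟨fun _ => (Fintype.card X : ℝ≥0∞)⁻¹, hu⟩, ⟨margY P, hm⟩⟩ : PMFon X × PMFon Y)) ?_
    exact key_bound P hP α hα
  · set P' : Y × X → ℝ≥0∞ := fun q => P (q.2, q.1) with hP'def
    have hP'sum : ∑ q, P' q = 1 := (sum_swap_pair P).trans hP
    have hu : ∑ _y : Y, (Fintype.card Y : ℝ≥0∞)⁻¹ = 1 := by
      rw [Finset.sum_const, Finset.card_univ, nsmul_eq_mul]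
      exact ENNReal.mul_inv_cancel (by exact_mod_cast Fintype.card_ne_zero)
        (ENNReal.natCast_ne_top _)
    have hm : ∑ x, margX P x = 1 := by
      rw [← hP, Fintype.sum_prod_type]
      simp [margX]
    have harg : (fun q : Y × X => (Fintype.card Y : ℝ≥0∞)⁻¹ * margY P' q.2)
        = (fun q : Y × X => margX P q.2 * (Fintype.card Y : ℝ≥0∞)⁻¹) := by
      funext q
      exact mul_comm _ _
    have heq : renyiDiv α P' (fun q => (Fintype.card Y : ℝ≥0∞)⁻¹ * margY P' q.2)
        = renyiDiv α P (fun p => margX P p.1 * (Fintype.card Y : ℝ≥0∞)⁻¹) := by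
      rw [harg]
      exact renyiDiv_swap α P (fun p => margX P p.1 * (Fintype.card Y : ℝ≥0∞)⁻¹)
    unfold Jalpha
    refine le_trans (iInf_le _
      (⟨⟨margX P, hm⟩, ⟨fun _ => (Fintype.card Y : ℝ≥0∞)⁻¹, hu⟩⟩ : PMFon X × PMFon Y)) ?_
    rw [← heq]
    exact key_bound P' hP'sum α hα
end

section
/- For every δ ∈ (0, 1/4) and any PMFs Q_X, Q_Y, one has 2^{−δ D_{1−δ}(P_XY||Q_X Q_Y)} ≤ ( Σ_{x,y} P(x,y) [P_X(x)P_Y(y)/P(x,y)]^{2δ} )^{1/2}, and consequently J_{1−δ}(X;Y) ≥ −(1/(2δ)) log Σ_{x,y} P(x,y) [P_X(x)P_Y(y)/P(x,y)]^{2δ}. -/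
open scoped ENNReal BigOperators
open Finset

private lemma two_isConj : (2:ℝ).HolderConjugate 2 := Real.holderConjugate_iff.mpr ⟨one_lt_two, by norm_num⟩

private lemma aux_factor {Z : Type*} [Fintype Z] (M Q : Z → ℝ≥0∞) (hM : ∑ z, M z = 1)
    (hQ : ∑ z, Q z = 1) {c : ℝ} (hc0 : 0 ≤ c) (hc1 : c ≤ 1) :
    ∑ z, M z * (Q z / M z) ^ c ≤ 1 := by
  have hMtop : ∀ z, M z ≠ ⊤ := fun z => ne_top_of_le_ne_top ENNReal.one_ne_top
    (hM ▸ Finset.single_le_sum (fun i _ => zero_le) (Finset.mem_univ z))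
  have hQtop : ∀ z, Q z ≠ ⊤ := fun z => ne_top_of_le_ne_top ENNReal.one_ne_top
    (hQ ▸ Finset.single_le_sum (fun i _ => zero_le) (Finset.mem_univ z))
  have hpt : ∀ z, M z * (Q z / M z) ^ c ≤ ENNReal.ofReal (1-c) * M z + ENNReal.ofReal c * Q z := by
    intro z
    rcases eq_or_ne (M z) 0 with h0 | h0
    · simp [h0]
    · have hdiv : Q z / M z ≠ ⊤ := (ENNReal.div_lt_top (hQtop z) h0).ne
      have hlhs : M z * (Q z / M z) ^ c ≠ ⊤ :=
        ENNReal.mul_ne_top (hMtop z) (ENNReal.rpow_ne_top_of_nonneg hc0 hdiv)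
      have hne1 : ENNReal.ofReal (1-c) * M z ≠ ⊤ :=
        ENNReal.mul_ne_top ENNReal.ofReal_ne_top (hMtop z)
      have hne2 : ENNReal.ofReal c * Q z ≠ ⊤ :=
        ENNReal.mul_ne_top ENNReal.ofReal_ne_top (hQtop z)
      have hrhs : ENNReal.ofReal (1-c) * M z + ENNReal.ofReal c * Q z ≠ ⊤ :=
        ENNReal.add_ne_top.mpr ⟨hne1, hne2⟩
      rw [← ENNReal.toReal_le_toReal hlhs hrhs]
      have hm : 0 < (M z).toReal := ENNReal.toReal_pos h0 (hMtop z)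
      have hq : 0 ≤ (Q z).toReal := ENNReal.toReal_nonneg
      rw [ENNReal.toReal_mul, ← ENNReal.toReal_rpow, ENNReal.toReal_div,
        ENNReal.toReal_add hne1 hne2, ENNReal.toReal_mul, ENNReal.toReal_mul,
        ENNReal.toReal_ofReal (by linarith), ENNReal.toReal_ofReal hc0]
      have hmc : (M z).toReal ^ c ≠ 0 := (Real.rpow_pos_of_pos hm c).ne'
      have key : (M z).toReal * ((Q z).toReal / (M z).toReal) ^ c
          = (M z).toReal ^ (1-c) * (Q z).toReal ^ c := by
        rw [Real.div_rpow hq hm.le, Real.rpow_sub hm, Real.rpow_one]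
        field_simp
      rw [key]
      exact Real.geom_mean_le_arith_mean2_weighted (by linarith) hc0 hm.le hq (by ring)
  calc ∑ z, M z * (Q z / M z) ^ c
      ≤ ∑ z, (ENNReal.ofReal (1-c) * M z + ENNReal.ofReal c * Q z) :=
        Finset.sum_le_sum fun z _ => hpt z
    _ = 1 := by
        rw [Finset.sum_add_distrib, ← Finset.mul_sum, ← Finset.mul_sum, hM, hQ, mul_one, mul_one,
          ← ENNReal.ofReal_add (by linarith) hc0]
        norm_num

private lemma key_bound_s8 {X Y : Type*} [Fintype X] [Fintype Y] (P : X × Y → ℝ≥0∞)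
    (hP : ∑ p, P p = 1) (δ : ℝ) (hδ0 : 0 < δ) (hδ : δ < 1/4)
    (QX : X → ℝ≥0∞) (hQX : ∑ x, QX x = 1) (QY : Y → ℝ≥0∞) (hQY : ∑ y, QY y = 1) :
    ∑ p, P p ^ (1-δ) * (QX p.1 * QY p.2) ^ δ
      ≤ (∑ p, P p * ((margX P p.1 * margY P p.2) / P p) ^ (2*δ)) ^ ((1:ℝ)/2) := by
  classical
  have hδ2 : (0:ℝ) ≤ 2*δ := by linarith
  have hPtop : ∀ p, P p ≠ ⊤ := fun p => ne_top_of_le_ne_top ENNReal.one_ne_top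
    (hP ▸ Finset.single_le_sum (fun i _ => zero_le) (Finset.mem_univ p))
  have hsum_mX : ∑ x, margX P x = 1 := by
    simp only [margX]; rw [← hP, Fintype.sum_prod_type]
  have hsum_mY : ∑ y, margY P y = 1 := by
    simp only [margY]; rw [← hP, Fintype.sum_prod_type]; exact Finset.sum_comm
  have hmXtop : ∀ x, margX P x ≠ ⊤ := fun x => ne_top_of_le_ne_top ENNReal.one_ne_top
    (hsum_mX ▸ Finset.single_le_sum (fun i _ => zero_le) (Finset.mem_univ x))
  have hmYtop : ∀ y, margY P y ≠ ⊤ := fun y => ne_top_of_le_ne_top ENNReal.one_ne_top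
    (hsum_mY ▸ Finset.single_le_sum (fun i _ => zero_le) (Finset.mem_univ y))
  have hQXtop : ∀ x, QX x ≠ ⊤ := fun x => ne_top_of_le_ne_top ENNReal.one_ne_top
    (hQX ▸ Finset.single_le_sum (fun i _ => zero_le) (Finset.mem_univ x))
  have hQYtop : ∀ y, QY y ≠ ⊤ := fun y => ne_top_of_le_ne_top ENNReal.one_ne_top
    (hQY ▸ Finset.single_le_sum (fun i _ => zero_le) (Finset.mem_univ y))
  have hPmX : ∀ p : X × Y, P p ≠ 0 → margX P p.1 ≠ 0 := by
    intro p hp h0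
    have hle : P p ≤ margX P p.1 :=
      Finset.single_le_sum (f := fun y => P (p.1, y)) (fun i _ => zero_le) (Finset.mem_univ p.2)
    exact hp (le_antisymm (h0 ▸ hle) zero_le)
  have hPmY : ∀ p : X × Y, P p ≠ 0 → margY P p.2 ≠ 0 := by
    intro p hp h0
    have hle : P p ≤ margY P p.2 :=
      Finset.single_le_sum (f := fun x => P (x, p.2)) (fun i _ => zero_le) (Finset.mem_univ p.1)
    exact hp (le_antisymm (h0 ▸ hle) zero_le)
  set Qf : X × Y → ℝ≥0∞ := fun p => QX p.1 * QY p.2 with hQf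
  set mm : X × Y → ℝ≥0∞ := fun p => margX P p.1 * margY P p.2 with hmmdef
  have hmm0 : ∀ p, P p ≠ 0 → mm p ≠ 0 := fun p hp => mul_ne_zero (hPmX p hp) (hPmY p hp)
  have hmmtop : ∀ p, mm p ≠ ⊤ := fun p => ENNReal.mul_ne_top (hmXtop p.1) (hmYtop p.2)
  set U : ℝ≥0∞ := ∑ p, P p * (Qf p / mm p) ^ (2*δ) with hUdef
  set S : ℝ≥0∞ := ∑ p, P p * (mm p / P p) ^ (2*δ) with hSdef
  -- Step 1: U ≤ 1 via Cauchy-Schwarz and aux_factor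
  have hU1 : U ≤ 1 := by
    have h1 : ∀ p : X × Y, P p * (Qf p / mm p) ^ (2*δ)
        = (P p ^ ((1:ℝ)/2) * (QX p.1 / margX P p.1) ^ (2*δ))
          * (P p ^ ((1:ℝ)/2) * (QY p.2 / margY P p.2) ^ (2*δ)) := by
      intro p
      rcases eq_or_ne (P p) 0 with h0 | h0
      · rw [h0, zero_mul, ENNReal.zero_rpow_of_pos (by norm_num : (0:ℝ) < 1/2), zero_mul, zero_mul]
      · have hsplit : Qf p / mm p = (QX p.1 / margX P p.1) * (QY p.2 / margY P p.2) := by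
          rw [hQf, hmmdef]
          simp only []
          rw [div_eq_mul_inv, ENNReal.mul_inv (Or.inl (hPmX p h0)) (Or.inl (hmXtop p.1)),
            div_eq_mul_inv, div_eq_mul_inv]
          ring
        rw [hsplit, ENNReal.mul_rpow_of_nonneg _ _ hδ2]
        have hPh : P p ^ ((1:ℝ)/2) * P p ^ ((1:ℝ)/2) = P p := by
          rw [← ENNReal.rpow_add _ _ h0 (hPtop p)]; norm_num
        calc P p * ((QX p.1 / margX P p.1) ^ (2*δ) * (QY p.2 / margY P p.2) ^ (2*δ))
            = (P p ^ ((1:ℝ)/2) * P p ^ ((1:ℝ)/2))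
              * ((QX p.1 / margX P p.1) ^ (2*δ) * (QY p.2 / margY P p.2) ^ (2*δ)) := by rw [hPh]
          _ = _ := by ring
    have h2 : ∀ p : X × Y, (P p ^ ((1:ℝ)/2) * (QX p.1 / margX P p.1) ^ (2*δ)) ^ (2:ℝ)
        = P p * (QX p.1 / margX P p.1) ^ (4*δ) := by
      intro p
      rw [ENNReal.mul_rpow_of_nonneg _ _ (by norm_num : (0:ℝ) ≤ 2), ← ENNReal.rpow_mul,
        ← ENNReal.rpow_mul, show ((1:ℝ)/2) * 2 = 1 by ring, show (2*δ) * 2 = 4*δ by ring,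
        ENNReal.rpow_one]
    have h3 : ∀ p : X × Y, (P p ^ ((1:ℝ)/2) * (QY p.2 / margY P p.2) ^ (2*δ)) ^ (2:ℝ)
        = P p * (QY p.2 / margY P p.2) ^ (4*δ) := by
      intro p
      rw [ENNReal.mul_rpow_of_nonneg _ _ (by norm_num : (0:ℝ) ≤ 2), ← ENNReal.rpow_mul,
        ← ENNReal.rpow_mul, show ((1:ℝ)/2) * 2 = 1 by ring, show (2*δ) * 2 = 4*δ by ring,
        ENNReal.rpow_one]
    have hF1 : ∑ p : X × Y, P p * (QX p.1 / margX P p.1) ^ (4*δ) ≤ 1 := by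
      have he : ∑ p : X × Y, P p * (QX p.1 / margX P p.1) ^ (4*δ)
          = ∑ x, margX P x * (QX x / margX P x) ^ (4*δ) := by
        rw [Fintype.sum_prod_type]
        refine Finset.sum_congr rfl fun x _ => ?_
        show ∑ y, P (x, y) * (QX x / margX P x) ^ (4*δ) = _
        rw [← Finset.sum_mul]; rfl
      rw [he]
      exact aux_factor _ _ hsum_mX hQX (by linarith) (by linarith)
    have hF2 : ∑ p : X × Y, P p * (QY p.2 / margY P p.2) ^ (4*δ) ≤ 1 := by
      have he : ∑ p : X × Y, P p * (QY p.2 / margY P p.2) ^ (4*δ)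
          = ∑ y, margY P y * (QY y / margY P y) ^ (4*δ) := by
        rw [Fintype.sum_prod_type, Finset.sum_comm]
        refine Finset.sum_congr rfl fun y _ => ?_
        show ∑ x, P (x, y) * (QY y / margY P y) ^ (4*δ) = _
        rw [← Finset.sum_mul]; rfl
      rw [he]
      exact aux_factor _ _ hsum_mY hQY (by linarith) (by linarith)
    calc U = ∑ p, (P p ^ ((1:ℝ)/2) * (QX p.1 / margX P p.1) ^ (2*δ))
          * (P p ^ ((1:ℝ)/2) * (QY p.2 / margY P p.2) ^ (2*δ)) :=
          Finset.sum_congr rfl fun p _ => h1 p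
      _ ≤ (∑ p, (P p ^ ((1:ℝ)/2) * (QX p.1 / margX P p.1) ^ (2*δ)) ^ (2:ℝ)) ^ ((1:ℝ)/2)
          * (∑ p, (P p ^ ((1:ℝ)/2) * (QY p.2 / margY P p.2) ^ (2*δ)) ^ (2:ℝ)) ^ ((1:ℝ)/2) :=
          ENNReal.inner_le_Lp_mul_Lq _ _ _ two_isConj
      _ = (∑ p : X × Y, P p * (QX p.1 / margX P p.1) ^ (4*δ)) ^ ((1:ℝ)/2)
          * (∑ p : X × Y, P p * (QY p.2 / margY P p.2) ^ (4*δ)) ^ ((1:ℝ)/2) := by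
          rw [Finset.sum_congr rfl fun p _ => h2 p, Finset.sum_congr rfl fun p _ => h3 p]
      _ ≤ 1 ^ ((1:ℝ)/2) * 1 ^ ((1:ℝ)/2) := by
          exact mul_le_mul' (ENNReal.rpow_le_rpow hF1 (by norm_num))
            (ENNReal.rpow_le_rpow hF2 (by norm_num))
      _ = 1 := by rw [ENNReal.one_rpow, one_mul]
  -- Step 2: main Cauchy-Schwarz
  have h1 : ∀ p : X × Y, P p ^ (1-δ) * Qf p ^ δ
      = ((P p ^ (1-2*δ) * mm p ^ (2*δ)) ^ ((1:ℝ)/2))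
        * ((P p * (Qf p / mm p) ^ (2*δ)) ^ ((1:ℝ)/2)) := by
    intro p
    rcases eq_or_ne (P p) 0 with h0 | h0
    · simp [h0, ENNReal.zero_rpow_of_pos (show (0:ℝ) < 1-2*δ by linarith),
        ENNReal.zero_rpow_of_pos (show (0:ℝ) < 1-δ by linarith),
        ENNReal.zero_rpow_of_pos (show (0:ℝ) < (1:ℝ)/2 by norm_num)]
    · rw [← ENNReal.mul_rpow_of_nonneg _ _ (by norm_num : (0:ℝ) ≤ 1/2)]
      have e1 : mm p ^ (2*δ) * (Qf p / mm p) ^ (2*δ) = Qf p ^ (2*δ) := by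
        rw [← ENNReal.mul_rpow_of_nonneg _ _ hδ2, ENNReal.mul_div_cancel (hmm0 p h0) (hmmtop p)]
      have e2 : P p ^ (1-2*δ) * P p = P p ^ (2-2*δ) := by
        rw [show (2-2*δ:ℝ) = (1-2*δ) + 1 by ring, ENNReal.rpow_add _ _ h0 (hPtop p),
          ENNReal.rpow_one]
      have einner : P p ^ (1-2*δ) * mm p ^ (2*δ) * (P p * (Qf p / mm p) ^ (2*δ))
          = P p ^ (2-2*δ) * Qf p ^ (2*δ) := by
        calc P p ^ (1-2*δ) * mm p ^ (2*δ) * (P p * (Qf p / mm p) ^ (2*δ))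
            = (P p ^ (1-2*δ) * P p) * (mm p ^ (2*δ) * (Qf p / mm p) ^ (2*δ)) := by ring
          _ = _ := by rw [e1, e2]
      rw [einner, ENNReal.mul_rpow_of_nonneg _ _ (by norm_num : (0:ℝ) ≤ 1/2),
        ← ENNReal.rpow_mul, ← ENNReal.rpow_mul, show (2-2*δ) * ((1:ℝ)/2) = 1-δ by ring,
        show (2*δ) * ((1:ℝ)/2) = δ by ring]
  have h2 : ∀ p : X × Y, ((P p ^ (1-2*δ) * mm p ^ (2*δ)) ^ ((1:ℝ)/2)) ^ (2:ℝ)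
      = P p * (mm p / P p) ^ (2*δ) := by
    intro p
    rw [← ENNReal.rpow_mul, show ((1:ℝ)/2) * 2 = 1 by ring, ENNReal.rpow_one]
    rcases eq_or_ne (P p) 0 with h0 | h0
    · rw [h0, ENNReal.zero_rpow_of_pos (by linarith : (0:ℝ) < 1-2*δ), zero_mul, zero_mul]
    · rw [ENNReal.div_rpow_of_nonneg _ _ hδ2]
      have e3 : P p ^ (1-2*δ) = P p / P p ^ (2*δ) := by
        rw [ENNReal.rpow_sub _ _ h0 (hPtop p), ENNReal.rpow_one]
      rw [e3, div_eq_mul_inv, div_eq_mul_inv]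
      ring
  have h3 : ∀ p : X × Y, ((P p * (Qf p / mm p) ^ (2*δ)) ^ ((1:ℝ)/2)) ^ (2:ℝ)
      = P p * (Qf p / mm p) ^ (2*δ) := by
    intro p
    rw [← ENNReal.rpow_mul, show ((1:ℝ)/2) * 2 = 1 by ring, ENNReal.rpow_one]
  calc ∑ p, P p ^ (1-δ) * Qf p ^ δ
      = ∑ p, ((P p ^ (1-2*δ) * mm p ^ (2*δ)) ^ ((1:ℝ)/2))
        * ((P p * (Qf p / mm p) ^ (2*δ)) ^ ((1:ℝ)/2)) := Finset.sum_congr rfl fun p _ => h1 p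
    _ ≤ (∑ p, ((P p ^ (1-2*δ) * mm p ^ (2*δ)) ^ ((1:ℝ)/2)) ^ (2:ℝ)) ^ ((1:ℝ)/2)
        * (∑ p, ((P p * (Qf p / mm p) ^ (2*δ)) ^ ((1:ℝ)/2)) ^ (2:ℝ)) ^ ((1:ℝ)/2) :=
        ENNReal.inner_le_Lp_mul_Lq _ _ _ two_isConj
    _ = S ^ ((1:ℝ)/2) * U ^ ((1:ℝ)/2) := by
        rw [Finset.sum_congr rfl fun p _ => h2 p, Finset.sum_congr rfl fun p _ => h3 p]
    _ ≤ S ^ ((1:ℝ)/2) * 1 ^ ((1:ℝ)/2) :=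
        mul_le_mul' le_rfl (ENNReal.rpow_le_rpow hU1 (by norm_num))
    _ = S ^ ((1:ℝ)/2) := by rw [ENNReal.one_rpow, mul_one]

private lemma key_final {X Y : Type*} [Fintype X] [Fintype Y] (P : X × Y → ℝ≥0∞)
    (hP : ∑ p, P p = 1) (δ : ℝ) (hδ0 : 0 < δ) (hδ : δ < 1/4)
    (QX : X → ℝ≥0∞) (hQX : ∑ x, QX x = 1) (QY : Y → ℝ≥0∞) (hQY : ∑ y, QY y = 1) :
    ((-(1/(2*δ)) *
        Real.log (∑ p, P p * ((margX P p.1 * margY P p.2) / P p) ^ (2*δ)).toReal : ℝ) : EReal)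
      ≤ renyiDiv (1 - δ) P (fun p => QX p.1 * QY p.2) := by
  have hne : ¬((1:ℝ) - δ = 1) := by intro h; linarith
  have hδ2 : (0:ℝ) ≤ 2*δ := by linarith
  have hPtop : ∀ p, P p ≠ ⊤ := fun p => ne_top_of_le_ne_top ENNReal.one_ne_top
    (hP ▸ Finset.single_le_sum (fun i _ => zero_le) (Finset.mem_univ p))
  have hsum_mX : ∑ x, margX P x = 1 := by
    simp only [margX]; rw [← hP, Fintype.sum_prod_type]
  have hsum_mY : ∑ y, margY P y = 1 := by
    simp only [margY]; rw [← hP, Fintype.sum_prod_type]; exact Finset.sum_comm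
  have hmXtop : ∀ x, margX P x ≠ ⊤ := fun x => ne_top_of_le_ne_top ENNReal.one_ne_top
    (hsum_mX ▸ Finset.single_le_sum (fun i _ => zero_le) (Finset.mem_univ x))
  have hmYtop : ∀ y, margY P y ≠ ⊤ := fun y => ne_top_of_le_ne_top ENNReal.one_ne_top
    (hsum_mY ▸ Finset.single_le_sum (fun i _ => zero_le) (Finset.mem_univ y))
  have hQXtop : ∀ x, QX x ≠ ⊤ := fun x => ne_top_of_le_ne_top ENNReal.one_ne_top
    (hQX ▸ Finset.single_le_sum (fun i _ => zero_le) (Finset.mem_univ x))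
  have hQYtop : ∀ y, QY y ≠ ⊤ := fun y => ne_top_of_le_ne_top ENNReal.one_ne_top
    (hQY ▸ Finset.single_le_sum (fun i _ => zero_le) (Finset.mem_univ y))
  rw [renyiDiv, if_neg hne]
  have hexp : (1:ℝ) - (1-δ) = δ := by ring
  simp only [hexp]
  set T := ∑ p : X × Y, P p ^ (1-δ) * (QX p.1 * QY p.2) ^ δ with hT
  set S := ∑ p : X × Y, P p * ((margX P p.1 * margY P p.2) / P p) ^ (2*δ) with hS
  have hTtop : T ≠ ⊤ := by
    rw [hT]
    refine ENNReal.sum_ne_top.mpr fun p _ => ?_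
    exact ENNReal.mul_ne_top
      (ENNReal.rpow_ne_top_of_nonneg (by linarith) (hPtop p))
      (ENNReal.rpow_ne_top_of_nonneg hδ0.le (ENNReal.mul_ne_top (hQXtop p.1) (hQYtop p.2)))
  have hStop : S ≠ ⊤ := by
    rw [hS]
    refine ENNReal.sum_ne_top.mpr fun p _ => ?_
    rcases eq_or_ne (P p) 0 with h0 | h0
    · rw [h0, zero_mul]; exact ENNReal.zero_ne_top
    · exact ENNReal.mul_ne_top (hPtop p)
        (ENNReal.rpow_ne_top_of_nonneg hδ2
          ((ENNReal.div_lt_top (ENNReal.mul_ne_top (hmXtop p.1) (hmYtop p.2)) h0).ne))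
  have hT2S : T ^ (2:ℝ) ≤ S := by
    have h := key_bound_s8 P hP δ hδ0 hδ QX hQX QY hQY
    calc T ^ (2:ℝ) ≤ (S ^ ((1:ℝ)/2)) ^ (2:ℝ) := ENNReal.rpow_le_rpow h (by norm_num)
      _ = S := by rw [← ENNReal.rpow_mul, show ((1:ℝ)/2) * 2 = 1 by ring, ENNReal.rpow_one]
  rcases eq_or_ne T 0 with hT0 | hT0
  · rw [hT0, ENNReal.log_zero, EReal.coe_mul_bot_of_neg]
    · exact le_top
    · exact_mod_cast (inv_lt_zero.mpr (by linarith : (1 - δ - 1 : ℝ) < 0))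
  · rw [ENNReal.log_pos_real hT0 hTtop, ← EReal.coe_mul, EReal.coe_le_coe_iff]
    have hTpos : 0 < T.toReal := ENNReal.toReal_pos hT0 hTtop
    have hreal : T.toReal ^ (2:ℝ) ≤ S.toReal := by
      rw [ENNReal.toReal_rpow]
      exact (ENNReal.toReal_le_toReal
        (ENNReal.rpow_ne_top_of_nonneg (by norm_num) hTtop) hStop).mpr hT2S
    have hlog : 2 * Real.log T.toReal ≤ Real.log S.toReal := by
      have h := Real.log_le_log (Real.rpow_pos_of_pos hTpos 2) hreal
      rwa [Real.log_rpow hTpos] at h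
    rw [show (1 - δ - 1 : ℝ)⁻¹ = -(δ⁻¹) by rw [show (1-δ-1:ℝ) = -δ by ring, inv_neg]]
    rw [neg_mul, neg_mul, neg_le_neg_iff, inv_eq_one_div, div_mul_eq_mul_div,
      div_mul_eq_mul_div, one_mul, one_mul,
      div_le_div_iff₀ hδ0 (by linarith : (0:ℝ) < 2*δ)]
    nlinarith [hlog, hδ0]

/-- for `δ ∈ (0, 1/4)`, `2^{-δ D_{1-δ}(P_XY‖Q_X Q_Y)} ≤ S^{1/2}` where
`S = ∑ P(x,y) (P_X(x)P_Y(y)/P(x,y))^{2δ}`; equivalently (taking `-(1/(2δ)) log₂` of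
both sides) `D_{1-δ}(P_XY‖Q_X Q_Y) ≥ -(1/(2δ)) log S`, and consequently
`J_{1-δ}(X;Y) ≥ -(1/(2δ)) log S`. -/
theorem stmt8 {X Y : Type*} [Fintype X] [Fintype Y] (P : X × Y → ℝ≥0∞)
    (hP : ∑ p, P p = 1) (δ : ℝ) (hδ0 : 0 < δ) (hδ : δ < 1/4) :
    (∀ (QX : X → ℝ≥0∞), ∑ x, QX x = 1 → ∀ (QY : Y → ℝ≥0∞), ∑ y, QY y = 1 →
      ((-(1/(2*δ)) *
          Real.log (∑ p, P p * ((margX P p.1 * margY P p.2) / P p) ^ (2*δ)).toReal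
        : ℝ) : EReal)
        ≤ renyiDiv (1 - δ) P (fun p => QX p.1 * QY p.2)) ∧
    ((-(1/(2*δ)) *
        Real.log (∑ p, P p * ((margX P p.1 * margY P p.2) / P p) ^ (2*δ)).toReal
      : ℝ) : EReal)
      ≤ Jalpha (1 - δ) P := by
  exact ⟨fun QX hQX QY hQY => key_final P hP δ hδ0 hδ QX hQX QY hQY,
    le_iInf fun Q => key_final P hP δ hδ0 hδ Q.1.1 Q.1.2 Q.2.1 Q.2.2⟩
end
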